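/- arXiv:math/0603437 — 6 statements merged into one kernel-verified Lean document; each statement's English description precedes it below -/
import Mathlib

section
/- Let A be a logmodular subalgebra of a unital C*-algebra M, and let Ψ : M → M be a positive contractive linear projection (Ψ ∘ Ψ = Ψ) whose range is a subalgebra of A containing the unit of M, and which is multiplicative on A (Ψ(ab) = Ψ(a)Ψ(b) for all a, b ∈ A). Then for every state ω of M: if ω(Ψ(a)) = ω(a) for all a ∈ A, then ω(Ψ(x)) = ω(x) for all x ∈ M. -/
set_option maxHeartbeats 1000000

open scoped ComplexOrder
open Complex Filter

noncomputable section

variable {M : Type*} [CStarAlgebra M] [PartialOrder M] [StarOrderedRing M]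

private lemma algMap_eq' (r : ℝ) : algebraMap ℝ M r = (r:ℂ) • (1:M) := by
  rw [IsScalarTower.algebraMap_apply ℝ ℂ M, Algebra.algebraMap_eq_smul_one]; norm_num

private lemma smul_nonneg'' (c : ℝ) (hc : 0 ≤ c) {x : M} (hx : 0 ≤ x) : 0 ≤ (c:ℂ) • x := by
  have key : (c:ℂ) • x = star ((Real.sqrt c : ℂ) • (1:M)) * x * ((Real.sqrt c : ℂ) • (1:M)) := by
    rw [star_smul, star_one, Complex.star_def, Complex.conj_ofReal]
    rw [smul_mul_assoc, one_mul, mul_smul_comm, mul_one, smul_smul, ← Complex.ofReal_mul,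
      Real.mul_self_sqrt hc]
  rw [key]
  exact star_left_conjugate_nonneg hx _

private lemma algebraMap_nonneg'' (r : ℝ) (hr : 0 ≤ r) : 0 ≤ algebraMap ℝ M r := by
  rw [algMap_eq']
  exact smul_nonneg'' r hr (by simpa using star_mul_self_nonneg (1:M))

private lemma algebraMap_mono'' {r s : ℝ} (hrs : r ≤ s) :
    (algebraMap ℝ M r) ≤ algebraMap ℝ M s := by
  have := algebraMap_nonneg'' (M := M) (s - r) (by linarith)
  rw [map_sub] at this
  exact sub_nonneg.mp this

private lemma state_real (ω : M →ₗ[ℂ] ℂ) (hω : ∀ x : M, 0 ≤ x → 0 ≤ ω x)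
    {h : M} (hh : IsSelfAdjoint h) : (ω h).im = 0 := by
  have h1 : 0 ≤ algebraMap ℝ M ‖h‖ - h := sub_nonneg.mpr hh.le_algebraMap_norm_self
  have h2 : (0:M) ≤ 1 := by simpa using star_mul_self_nonneg (1:M)
  have e : ω h = ω (algebraMap ℝ M ‖h‖) - ω (algebraMap ℝ M ‖h‖ - h) := by
    rw [map_sub]; ring
  have i1 : (ω 1).im = 0 := ((Complex.le_def.mp (hω 1 h2)).2).symm
  have i2 : (ω (algebraMap ℝ M ‖h‖ - h)).im = 0 := ((Complex.le_def.mp (hω _ h1)).2).symm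
  have i3 : (ω (algebraMap ℝ M ‖h‖)).im = 0 := by
    rw [algMap_eq', map_smul, smul_eq_mul, Complex.mul_im]
    simp [i1]
  rw [e, Complex.sub_im, i2, i3, sub_zero]

private lemma state_star (ω : M →ₗ[ℂ] ℂ) (hω : ∀ x : M, 0 ≤ x → 0 ≤ ω x)
    (x : M) : ω (star x) = (starRingEnd ℂ) (ω x) := by
  have hsa : IsSelfAdjoint (x + star x) := by
    simp [IsSelfAdjoint, star_add, add_comm]
  have ksa : IsSelfAdjoint (Complex.I • (star x - x)) := by
    simp only [IsSelfAdjoint, star_smul, star_sub, star_star, Complex.star_def, Complex.conj_I]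
    rw [neg_smul, ← smul_neg, neg_sub]
  have hx : x = (2⁻¹:ℂ) • (x + star x) + ((Complex.I : ℂ)/2) • (Complex.I • (star x - x)) := by
    match_scalars <;> simp [Complex.ext_iff] <;> ring
  have hsx : star x = (2⁻¹:ℂ) • (x + star x) - ((Complex.I : ℂ)/2) • (Complex.I • (star x - x)) := by
    match_scalars <;> simp [Complex.ext_iff] <;> ring
  have r1 := state_real ω hω hsa
  have r2 := state_real ω hω ksa
  have e1 : ω x = (2⁻¹:ℂ) * ω (x + star x) + (Complex.I/2) * ω (Complex.I • (star x - x)) := by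
    conv_lhs => rw [hx]
    rw [map_add, map_smul, map_smul]; simp [smul_eq_mul]
  have e2 : ω (star x) = (2⁻¹:ℂ) * ω (x + star x) - (Complex.I/2) * ω (Complex.I • (star x - x)) := by
    conv_lhs => rw [hsx]
    rw [map_sub, map_smul, map_smul]; simp [smul_eq_mul]
  generalize hP : ω (x + star x) = P at *
  generalize hQ : ω (Complex.I • (star x - x)) = Q at *
  rw [e1, e2]
  apply Complex.ext <;>
    simp [Complex.conj_re, Complex.conj_im, Complex.add_re, Complex.add_im, Complex.sub_re,
      Complex.sub_im, Complex.mul_re, Complex.mul_im, Complex.div_re, Complex.div_im, r1, r2] <;>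
    ring

private lemma state_nonneg_re (ω : M →ₗ[ℂ] ℂ) (hω : ∀ x : M, 0 ≤ x → 0 ≤ ω x)
    {z : M} (hz : 0 ≤ z) : 0 ≤ (ω z).re := by
  simpa using (Complex.le_def.mp (hω z hz)).1

private lemma state_mono (ω : M →ₗ[ℂ] ℂ) (hω : ∀ x : M, 0 ≤ x → 0 ≤ ω x)
    {x y : M} (hxy : x ≤ y) : (ω x).re ≤ (ω y).re := by
  have h := state_nonneg_re ω hω (sub_nonneg.mpr hxy)
  rw [map_sub, Complex.sub_re] at h; linarith

private lemma state_bound (ω : M →ₗ[ℂ] ℂ) (hω : ∀ x : M, 0 ≤ x → 0 ≤ ω x)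
    (hω1 : ω 1 = 1) {h : M} (hh : IsSelfAdjoint h) :
    |(ω h).re| ≤ ‖h‖ := by
  have e : (ω (algebraMap ℝ M ‖h‖)).re = ‖h‖ := by
    rw [algMap_eq', map_smul, smul_eq_mul, hω1, mul_one, Complex.ofReal_re]
  have e2 : (ω (-algebraMap ℝ M ‖h‖)).re = -‖h‖ := by
    rw [map_neg, Complex.neg_re, e]
  have u1 := state_mono ω hω hh.le_algebraMap_norm_self
  have u2 := state_mono ω hω hh.neg_algebraMap_norm_le_self
  rw [e] at u1; rw [e2] at u2
  rw [abs_le]; exact ⟨u2, u1⟩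

private lemma state_tendsto (ω : M →ₗ[ℂ] ℂ) (hω : ∀ x : M, 0 ≤ x → 0 ≤ ω x)
    (hω1 : ω 1 = 1) {u : M} (hu : IsSelfAdjoint u) {s : ℕ → M}
    (hs : ∀ n, IsSelfAdjoint (s n)) (hlim : Tendsto s atTop (nhds u)) :
    Tendsto (fun n => (ω (s n)).re) atTop (nhds ((ω u).re)) := by
  have hnorm : Tendsto (fun n => ‖s n - u‖) atTop (nhds 0) := by
    have := (hlim.sub (tendsto_const_nhds : Tendsto (fun _ : ℕ => u) atTop (nhds u))).norm
    simpa using this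
  rw [tendsto_iff_dist_tendsto_zero]
  apply squeeze_zero (fun n => dist_nonneg) (fun n => ?_) hnorm
  rw [Real.dist_eq]
  have := state_bound ω hω hω1 ((hs n).sub hu)
  rw [map_sub, Complex.sub_re] at this
  exact this

private lemma state_cs (ω : M →ₗ[ℂ] ℂ) (hω : ∀ x : M, 0 ≤ x → 0 ≤ ω x)
    (X Y : M) (hXY : ω (X * star Y) = 1) :
    1 ≤ (ω (X * star X)).re * (ω (Y * star Y)).re := by
  have hYX : ω (Y * star X) = 1 := by
    have h : Y * star X = star (X * star Y) := by simp [star_mul]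
    rw [h, state_star ω hω, hXY, map_one]
  set F := (ω (X * star X)).re with hF
  set G := (ω (Y * star Y)).re with hG
  have G0 : 0 ≤ G := state_nonneg_re ω hω (mul_star_self_nonneg Y)
  have key : ∀ t : ℝ, 0 ≤ F - 2*t + t^2 * G := by
    intro t
    have hpos : (0:M) ≤ (X - (t:ℂ)•Y) * star (X - (t:ℂ)•Y) := mul_star_self_nonneg _
    have expand : (X - (t:ℂ)•Y) * star (X - (t:ℂ)•Y)
        = X*star X - (t:ℂ)•(X*star Y) - ((t:ℂ)•(Y*star X) - ((t:ℂ)*(t:ℂ))•(Y*star Y)) := by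
      rw [star_sub, star_smul, Complex.star_def, Complex.conj_ofReal]
      simp only [mul_sub, sub_mul, smul_mul_assoc, mul_smul_comm, smul_smul]
      module
    have h0 := state_nonneg_re ω hω hpos
    rw [expand, map_sub, map_sub, map_sub, map_smul, map_smul, map_smul, hXY, hYX,
      ← Complex.ofReal_mul] at h0
    simp only [smul_eq_mul, mul_one, Complex.sub_re, Complex.mul_re, Complex.ofReal_re,
      Complex.ofReal_im, Complex.one_re, Complex.one_im] at h0
    nlinarith [h0]
  rcases eq_or_lt_of_le G0 with hGz | hGpos
  · exfalso
    have := key ((F+1)/2)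
    rw [← hGz] at this
    nlinarith
  · have := key (1/G)
    have hG2 : (1/G)^2 * G = 1/G := by field_simp
    have h3 : 1/G ≤ F := by linarith
    rw [div_le_iff₀ hGpos] at h3
    linarith

/-- `A` is a logmodular subalgebra of the unital C*-algebra `M`: every positive invertible
element of `M` is a norm limit of elements of the form `star a * a`, where `a ∈ A` is
invertible in `M` with `a⁻¹ ∈ A`. -/
def IsLogmodular (A : Subalgebra ℂ M) : Prop :=
  ∀ b : M, 0 ≤ b → IsUnit b →
    b ∈ closure {x : M | ∃ a ∈ A, ∃ a' ∈ A, a * a' = 1 ∧ a' * a = 1 ∧ x = star a * a}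

/-- If `A` is a logmodular subalgebra of a unital C*-algebra `M` and `Ψ : M → M` is a positive
contractive linear projection whose range is a subalgebra of `A` containing the unit, and which
is multiplicative on `A`, then every state `ω` of `M` with `ω ∘ Ψ = ω` on `A` satisfies
`ω ∘ Ψ = ω` on all of `M`. -/
theorem logmodular_unique_extension
    (A : Subalgebra ℂ M) (hA : IsLogmodular A)
    (Ψ : M →L[ℂ] M)
    (hΨpos : ∀ x : M, 0 ≤ x → 0 ≤ Ψ x)
    (hΨcontr : ∀ x : M, ‖Ψ x‖ ≤ ‖x‖)
    (hΨproj : ∀ x : M, Ψ (Ψ x) = Ψ x)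
    (hΨrange_sub : Set.range Ψ ⊆ (A : Set M))
    (hΨone : (1 : M) ∈ Set.range Ψ)
    (hΨrange_mul : ∀ x ∈ Set.range Ψ, ∀ y ∈ Set.range Ψ, x * y ∈ Set.range Ψ)
    (hΨmult : ∀ a ∈ A, ∀ b ∈ A, Ψ (a * b) = Ψ a * Ψ b)
    (ω : M →ₗ[ℂ] ℂ)
    (hωpos : ∀ x : M, 0 ≤ x → 0 ≤ ω x) (hωone : ω 1 = 1)
    (hωA : ∀ a ∈ A, ω (Ψ a) = ω a) :
    ∀ x : M, ω (Ψ x) = ω x := by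
  classical
  -- basic facts about Ψ
  have hΨ1 : Ψ (1:M) = (1:M) := by
    obtain ⟨y, hy⟩ := hΨone
    calc Ψ 1 = Ψ (Ψ y) := by rw [hy]
    _ = Ψ y := hΨproj y
    _ = 1 := hy
  have hfix : ∀ x : M, x ∈ Set.range Ψ → Ψ x = x := by
    rintro x ⟨y, rfl⟩; exact hΨproj y
  have hΨalg : ∀ r : ℝ, Ψ (algebraMap ℝ M r) = algebraMap ℝ M r := by
    intro r; rw [algMap_eq', map_smul, hΨ1]
  have hΨsa : ∀ h : M, IsSelfAdjoint h → IsSelfAdjoint (Ψ h) := by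
    intro h hh
    have h1 : 0 ≤ algebraMap ℝ M ‖h‖ - h := sub_nonneg.mpr hh.le_algebraMap_norm_self
    have e : Ψ h = algebraMap ℝ M ‖h‖ - Ψ (algebraMap ℝ M ‖h‖ - h) := by
      rw [map_sub, hΨalg, sub_sub_cancel]
    rw [e]
    exact (IsSelfAdjoint.of_nonneg (algebraMap_nonneg'' _ (norm_nonneg h))).sub
      (IsSelfAdjoint.of_nonneg (hΨpos _ h1))
  have hΨstar : ∀ x : M, Ψ (star x) = star (Ψ x) := by
    intro x
    have hsa : IsSelfAdjoint (x + star x) := by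
      simp [IsSelfAdjoint, star_add, add_comm]
    have ksa : IsSelfAdjoint (Complex.I • (star x - x)) := by
      simp only [IsSelfAdjoint, star_smul, star_sub, star_star, Complex.star_def, Complex.conj_I]
      rw [neg_smul, ← smul_neg, neg_sub]
    have hx : x = (2⁻¹:ℂ) • (x + star x) + ((Complex.I : ℂ)/2) • (Complex.I • (star x - x)) := by
      match_scalars <;> simp [Complex.ext_iff] <;> ring
    have hsx : star x = (2⁻¹:ℂ) • (x + star x) - ((Complex.I : ℂ)/2) • (Complex.I • (star x - x)) := by
      match_scalars <;> simp [Complex.ext_iff] <;> ring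
    have r1 := hΨsa _ hsa
    have r2 := hΨsa _ ksa
    have e1 : Ψ (star x)
        = (2⁻¹:ℂ) • Ψ (x + star x) - ((Complex.I:ℂ)/2) • Ψ (Complex.I • (star x - x)) := by
      conv_lhs => rw [hsx]
      rw [map_sub, map_smul, map_smul]
    have e2 : star (Ψ x)
        = (2⁻¹:ℂ) • Ψ (x + star x) - ((Complex.I:ℂ)/2) • Ψ (Complex.I • (star x - x)) := by
      conv_lhs => rw [hx]
      rw [map_add, map_smul, map_smul, star_add, star_smul, star_smul, r1.star_eq, r2.star_eq]
      have c1 : (starRingEnd ℂ) (2⁻¹:ℂ) = (2⁻¹:ℂ) := by simp [Complex.ext_iff]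
      have c2 : (starRingEnd ℂ) ((Complex.I:ℂ)/2) = -((Complex.I:ℂ)/2) := by
        rw [map_div₀, Complex.conj_I, Complex.conj_ofNat, neg_div]
      simp only [Complex.star_def, c1, c2, neg_smul]
      abel
    rw [e1, e2]
  -- the composite state
  set φL : M →ₗ[ℂ] ℂ := ω.comp (Ψ : M →ₗ[ℂ] M) with hφLdef
  have hφLapp : ∀ x, φL x = ω (Ψ x) := fun _ => rfl
  have hφpos : ∀ x : M, 0 ≤ x → 0 ≤ φL x := fun x hx => hωpos _ (hΨpos x hx)
  have hφ1 : φL 1 = 1 := by rw [hφLapp, hΨ1, hωone]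
  -- inverses of selfadjoint positive units
  have hinv_pos : ∀ u : M, 0 ≤ u → IsUnit u →
      0 ≤ Ring.inverse u ∧ star (Ring.inverse u) = Ring.inverse u := by
    intro u hu huU
    have husa : IsSelfAdjoint u := IsSelfAdjoint.of_nonneg hu
    have h1 : u * Ring.inverse u = 1 := Ring.mul_inverse_cancel u huU
    have h2 : Ring.inverse u * u = 1 := Ring.inverse_mul_cancel u huU
    set v := Ring.inverse u with hv
    have e1 : star v * u = 1 := by
      calc star v * u = star v * star u := by rw [husa.star_eq]
      _ = star (u * v) := by rw [star_mul]
      _ = 1 := by rw [h1, star_one]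
    have hsv : star v = v := by
      calc star v = star v * (u * v) := by rw [h1, mul_one]
      _ = (star v * u) * v := by rw [mul_assoc]
      _ = v := by rw [e1, one_mul]
    constructor
    · have h3 : 0 ≤ star v * u * v := star_left_conjugate_nonneg hu v
      rwa [hsv, h2, one_mul] at h3
    · exact hsv
  -- the master inequality
  have master : ∀ u : M, 0 ≤ u → IsUnit u →
      1 ≤ (ω u).re * (ω (Ψ (Ring.inverse u))).re := by
    intro u hu huU
    obtain ⟨s, hsmem, hslim⟩ := mem_closure_iff_seq_limit.mp (hA u hu huU)
    choose a haA a' ha'A haa' ha'a hseq using hsmem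
    have p1 : ∀ n, s n * (a' n * star (a' n)) = 1 := by
      intro n
      rw [hseq n, mul_assoc, ← mul_assoc (a n) (a' n), haa' n, one_mul, ← star_mul,
        ha'a n, star_one]
    have p2 : ∀ n, (a' n * star (a' n)) * s n = 1 := by
      intro n
      rw [hseq n, mul_assoc, ← mul_assoc (star (a' n)) (star (a n)) (a n), ← star_mul,
        haa' n, star_one, one_mul, ha'a n]
    have hinv : ∀ n, Ring.inverse (s n) = a' n * star (a' n) := by
      intro n
      exact Ring.inverse_unit ⟨s n, a' n * star (a' n), p1 n, p2 n⟩
    have core : ∀ n, 1 ≤ (ω (s n)).re * (ω (Ψ (Ring.inverse (s n)))).re := by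
      intro n
      set p := Ψ (a n) with hp
      set q := Ψ (a' n) with hq
      have hΨp : Ψ p = p := hΨproj (a n)
      have hpA : p ∈ A := hΨrange_sub ⟨a n, rfl⟩
      have hqp : q * p = 1 := by
        rw [hp, hq, ← hΨmult _ (ha'A n) _ (haA n), ha'a n, hΨ1]
      have hstarpA : star p ∈ A := by
        have h := hΨstar (a n)
        rw [hp, ← h]
        exact hΨrange_sub ⟨star (a n), rfl⟩
      set d := a n - p with hd
      have hdA : d ∈ A := A.sub_mem (haA n) hpA
      have hΨd : Ψ d = 0 := by rw [hd, map_sub, hΨproj, sub_self]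
      have bridge1 : ω (star p * d) = 0 := by
        have hmem : star p * d ∈ A := A.mul_mem hstarpA hdA
        rw [← hωA _ hmem, hΨmult _ hstarpA _ hdA, hΨd, mul_zero, map_zero]
      have bridge2 : ω (star d * p) = 0 := by
        have h : star d * p = star (star p * d) := by rw [star_mul, star_star]
        rw [h, state_star ω hωpos, bridge1, map_zero]
      have expand : ω (s n) = ω (star p * p) + (ω (star p * d) + (ω (star d * p)
          + ω (star d * d))) := by
        have ea : s n = star p * p + (star p * d + (star d * p + star d * d)) := by
          rw [hseq n]
          have hap : a n = p + d := by rw [hd]; abel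
          rw [hap, star_add]
          noncomm_ring
        rw [ea, map_add, map_add, map_add]
      have ineq1 : (ω (star p * p)).re ≤ (ω (s n)).re := by
        have hdd := state_nonneg_re ω hωpos (star_mul_self_nonneg d)
        rw [expand, bridge1, bridge2]
        simp only [Complex.add_re, Complex.zero_re, zero_add]
        linarith
      have hfixpp : Ψ (star p * p) = star p * p := by
        apply hfix
        exact hΨrange_mul (star p) ⟨star (a n), hΨstar (a n)⟩ p ⟨a n, rfl⟩
      have hXY : φL (a' n * star (star p)) = 1 := by
        rw [star_star, hφLapp, hΨmult _ (ha'A n) _ hpA, hΨp, ← hq, hqp, hωone]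
      have hcs := state_cs φL hφpos (a' n) (star p) hXY
      rw [star_star] at hcs
      have e2 : (φL (star p * p)).re = (ω (star p * p)).re := by rw [hφLapp, hfixpp]
      rw [e2] at hcs
      have hnn : 0 ≤ (φL (a' n * star (a' n))).re :=
        state_nonneg_re φL hφpos (mul_star_self_nonneg _)
      have h3 : 1 ≤ (φL (a' n * star (a' n))).re * (ω (s n)).re :=
        le_trans hcs (mul_le_mul_of_nonneg_left ineq1 hnn)
      rw [hinv n]
      calc (1:ℝ) ≤ (φL (a' n * star (a' n))).re * (ω (s n)).re := h3
      _ = (ω (s n)).re * (ω (Ψ (a' n * star (a' n)))).re := by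
        rw [hφLapp]; ring
    have hsaS : ∀ n, IsSelfAdjoint (s n) := fun n => by
      rw [hseq n]; exact IsSelfAdjoint.of_nonneg (star_mul_self_nonneg _)
    have husa : IsSelfAdjoint u := IsSelfAdjoint.of_nonneg hu
    have t1 := state_tendsto ω hωpos hωone husa hsaS hslim
    have hinvca : ContinuousAt Ring.inverse u := by
      have h := NormedRing.inverse_continuousAt huU.unit
      rwa [IsUnit.unit_spec] at h
    have t2 : Tendsto (fun n => Ring.inverse (s n)) atTop (nhds (Ring.inverse u)) :=
      hinvca.tendsto.comp hslim
    have t3 : Tendsto (fun n => Ψ (Ring.inverse (s n))) atTop (nhds (Ψ (Ring.inverse u))) :=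
      (Ψ.continuous.tendsto _).comp t2
    have hinner : ∀ n, IsSelfAdjoint (Ψ (Ring.inverse (s n))) := fun n => by
      rw [hinv n]; exact IsSelfAdjoint.of_nonneg (hΨpos _ (mul_star_self_nonneg _))
    have hΨiu : IsSelfAdjoint (Ψ (Ring.inverse u)) :=
      IsSelfAdjoint.of_nonneg (hΨpos _ (hinv_pos u hu huU).1)
    have t4 := state_tendsto ω hωpos hωone hΨiu hinner t3
    exact ge_of_tendsto (t1.mul t4) (Filter.Eventually.of_forall core)
  -- selfadjoint case via Hoffman's derivative trick
  have main_sa : ∀ w : M, IsSelfAdjoint w → ω (Ψ w) = ω w := by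
    intro w hw
    set α := (ω w).re with hα
    set β := (ω (Ψ w)).re with hβ
    set C : ℝ := 2*‖w‖^2 with hC
    have hC0 : 0 ≤ C := by rw [hC]; positivity
    clear_value α β C
    have hKey : ∀ t : ℝ, |t| * (‖w‖ + 1) ≤ 2⁻¹ →
        1 ≤ (1 + t * α) * (1 - t * β + C * t^2) := by
      intro t ht
      have habs : |t| * ‖w‖ ≤ 2⁻¹ := by nlinarith [abs_nonneg t, norm_nonneg w]
      set tw := (t:ℂ) • w with htw
      clear_value tw
      have htwnorm : ‖tw‖ ≤ 2⁻¹ := by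
        rw [htw, norm_smul, Complex.norm_real, Real.norm_eq_abs]; exact habs
      have htwsa : IsSelfAdjoint tw := by
        rw [htw]
        exact IsSelfAdjoint.smul (show star (t:ℂ) = (t:ℂ) by
          rw [Complex.star_def, Complex.conj_ofReal]) hw
      set u := 1 + tw with hudef
      clear_value u
      have husa : IsSelfAdjoint u := by rw [hudef]; exact (IsSelfAdjoint.one (R := M)).add htwsa
      have hunit : IsUnit u := by
        have h := isUnit_one_sub_of_norm_lt_one (x := -tw) (by rw [norm_neg]; linarith)
        rw [sub_neg_eq_add, ← hudef] at h
        exact h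
      have hupos : (0:M) ≤ u := by
        have h1 : -(algebraMap ℝ M ‖tw‖) ≤ tw := htwsa.neg_algebraMap_norm_le_self
        have h2 : (0:M) ≤ algebraMap ℝ M (1 - ‖tw‖) := algebraMap_nonneg'' _ (by linarith)
        have h3 : algebraMap ℝ M (1 - ‖tw‖) ≤ u := by
          rw [map_sub, map_one, hudef, sub_eq_add_neg]
          exact add_le_add_right h1 1
        exact le_trans h2 h3
      set v := Ring.inverse u with hv
      clear_value v
      have h1 : u * v = 1 := by rw [hv]; exact Ring.mul_inverse_cancel u hunit
      have h2 : v * u = 1 := by rw [hv]; exact Ring.inverse_mul_cancel u hunit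
      have hvps := hinv_pos u hupos hunit
      rw [← hv] at hvps
      obtain ⟨hvpos, hvstar⟩ := hvps
      have hcomm : w * v = v * w := by
        have hc1 : u * w = w * u := by
          rw [hudef, htw]
          simp only [add_mul, mul_add, one_mul, mul_one, smul_mul_assoc, mul_smul_comm]
        calc w * v = v * u * w * v := by rw [h2, one_mul]
        _ = v * (w * u) * v := by rw [mul_assoc v u w, hc1]
        _ = v * w * u * v := by rw [← mul_assoc v w u]
        _ = v * w * (u * v) := by rw [mul_assoc (v*w) u v]
        _ = v * w := by rw [h1, mul_one]
      have e1 : u * (1 - tw) = 1 - tw*tw := by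
        rw [hudef]
        simp only [mul_sub, add_mul, one_mul, mul_one]
        abel
      have e2 : 1 - tw = v - v*(tw*tw) := by
        calc 1 - tw = (v*u)*(1-tw) := by rw [h2, one_mul]
        _ = v*(u*(1-tw)) := by rw [mul_assoc]
        _ = v*(1 - tw*tw) := by rw [e1]
        _ = v - v*(tw*tw) := by rw [mul_sub, mul_one]
      have e3 : v * (tw * tw) = ((t*t : ℝ):ℂ) • (w*v*w) := by
        rw [htw]
        simp only [smul_mul_assoc, mul_smul_comm, smul_smul]
        rw [← Complex.ofReal_mul]
        congr 1
        rw [← mul_assoc, ← hcomm]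
      have hviden : v = 1 - tw + ((t*t:ℝ):ℂ) • (w*v*w) := by
        have hstep : v = (1 - tw) + v*(tw*tw) := by rw [e2]; abel
        conv_lhs => rw [hstep]
        rw [e3]
      have hvnorm : ‖v‖ ≤ 2 := by
        have ev : v = 1 - tw * v := by
          have hh : (1 + tw) * v = 1 := by rw [← hudef]; exact h1
          rw [add_mul, one_mul] at hh
          exact eq_sub_of_add_eq hh
        have hone_le : ‖(1:M)‖ ≤ 1 := by
          have h := CStarRing.norm_self_mul_star (x := (1:M))
          rw [star_one, mul_one] at h
          nlinarith [norm_nonneg (1:M)]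
        have hb : ‖v‖ ≤ 1 + 2⁻¹*‖v‖ := by
          have c1 : ‖v‖ = ‖1 - tw*v‖ := by rw [← ev]
          have c2 : ‖(1:M) - tw*v‖ ≤ ‖(1:M)‖ + ‖tw*v‖ := norm_sub_le _ _
          have c3 : ‖tw*v‖ ≤ ‖tw‖*‖v‖ := norm_mul_le _ _
          have c4 : ‖tw‖*‖v‖ ≤ 2⁻¹*‖v‖ :=
            mul_le_mul_of_nonneg_right htwnorm (norm_nonneg v)
          linarith
        linarith
      have hz : (0:M) ≤ w*v*w := by
        have hcn := star_left_conjugate_nonneg hvpos w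
        rwa [hw.star_eq] at hcn
      have hznorm : ‖w*v*w‖ ≤ C := by
        calc ‖w*v*w‖ ≤ ‖w*v‖*‖w‖ := norm_mul_le _ _
        _ ≤ (‖w‖*‖v‖)*‖w‖ := mul_le_mul_of_nonneg_right (norm_mul_le _ _) (norm_nonneg w)
        _ ≤ C := by rw [hC]; nlinarith [norm_nonneg w, norm_nonneg v, hvnorm]
      have hzle : w*v*w ≤ algebraMap ℝ M C :=
        le_trans (IsSelfAdjoint.le_algebraMap_norm_self (IsSelfAdjoint.of_nonneg hz))
          (algebraMap_mono'' hznorm)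
      have hsle : ((t*t:ℝ):ℂ) • (w*v*w) ≤ ((t*t:ℝ):ℂ) • (algebraMap ℝ M C) := by
        have hd := smul_nonneg'' (t*t) (mul_self_nonneg t) (sub_nonneg.mpr hzle)
        rw [smul_sub] at hd
        exact sub_nonneg.mp hd
      have hsalg : ((t*t:ℝ):ℂ) • (algebraMap ℝ M C : M) = algebraMap ℝ M (C*t^2) := by
        rw [algMap_eq', algMap_eq', smul_smul, ← Complex.ofReal_mul]
        norm_cast
        ring_nf
      have hvle : v ≤ 1 - tw + algebraMap ℝ M (C*t^2) := by
        rw [hviden]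
        exact add_le_add_right (le_of_le_of_eq hsle hsalg) _
      have hm := state_mono φL hφpos hvle
      have hrhs : (φL (1 - tw + algebraMap ℝ M (C*t^2))).re = 1 - t*β + C*t^2 := by
        rw [map_add, map_sub, hφ1, htw, map_smul, algMap_eq', map_smul, hφ1]
        rw [hβ, ← hφLapp]
        simp only [smul_eq_mul, mul_one, Complex.add_re, Complex.sub_re, Complex.one_re,
          Complex.mul_re, Complex.ofReal_re, Complex.ofReal_im]
        ring
      rw [hrhs] at hm
      have hωu : (ω u).re = 1 + t*α := by
        rw [hudef, map_add, hωone, htw, map_smul]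
        rw [hα]
        simp only [smul_eq_mul, Complex.add_re, Complex.one_re, Complex.mul_re,
          Complex.ofReal_re, Complex.ofReal_im]
        ring
      have hωu0 : 0 ≤ (ω u).re := state_nonneg_re ω hωpos hupos
      have hM := master u hupos hunit
      rw [← hv] at hM
      calc (1:ℝ) ≤ (ω u).re * (ω (Ψ v)).re := hM
      _ ≤ (ω u).re * (1 - t*β + C*t^2) := mul_le_mul_of_nonneg_left hm hωu0
      _ = (1 + t*α) * (1 - t*β + C*t^2) := by rw [hωu]
    -- conclude α = β
    have hreq : β = α := by
      have hKey' : ∀ t : ℝ, |t| * (‖w‖ + 1) ≤ 2⁻¹ →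
          1 ≤ (1 + t * α) * (1 - t * β + C * t^2) := hKey
      have hC0' : (0:ℝ) ≤ C := hC0
      have hwn : (0:ℝ) ≤ ‖w‖ := norm_nonneg w
      set t₀ : ℝ := 2⁻¹ / (‖w‖ + 1) with ht₀
      have hw1 : (0:ℝ) < ‖w‖ + 1 := by linarith
      have ht₀pos : 0 < t₀ := by positivity
      have ht₀le : t₀ * (‖w‖+1) = 2⁻¹ := by rw [ht₀]; field_simp
      set K : ℝ := |C - α*β| + C*|α| + 1 with hK
      have hX : (0:ℝ) ≤ C*|α| := mul_nonneg hC0' (abs_nonneg α)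
      have hK0 : (0:ℝ) < K := by
        have h6 := abs_nonneg (C - α*β)
        linarith
      have hstep : ∀ t : ℝ, 0 < t → t ≤ t₀ → |α - β| ≤ t * K := by
        intro t htpos htle
        have ht1 : t ≤ 1 := by
          have h5 : t₀ ≤ 2⁻¹ := by
            rw [ht₀]
            exact div_le_self (by norm_num) (by linarith)
          linarith
        have habs1 : |t| * (‖w‖+1) ≤ 2⁻¹ := by
          rw [abs_of_pos htpos]
          calc t*(‖w‖+1) ≤ t₀*(‖w‖+1) := mul_le_mul_of_nonneg_right htle hw1.le
          _ = 2⁻¹ := ht₀le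
        have habs2 : |(-t)| * (‖w‖+1) ≤ 2⁻¹ := by rw [abs_neg]; exact habs1
        have P1 := hKey' t habs1
        have P2 := hKey' (-t) habs2
        have eq1 : (1 + t*α)*(1 - t*β + C*t^2)
            = 1 + t*(β-α)*(-1) + t*t*((C - α*β) + t*(C*α)) := by ring
        have E1 : t*(β-α) ≤ t*t*((C-α*β) + t*(C*α)) := by
          rw [eq1] at P1; linarith
        have eq2 : (1 + (-t)*α)*(1 - (-t)*β + C*(-t)^2)
            = 1 + t*(α-β)*(-1) + t*t*((C - α*β) - t*(C*α)) := by ring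
        have E2 : t*(α-β) ≤ t*t*((C-α*β) - t*(C*α)) := by
          rw [eq2] at P2; linarith
        have h9 : C*α ≤ C*|α| := mul_le_mul_of_nonneg_left (le_abs_self _) hC0'
        have h9' : -(C*α) ≤ C*|α| := by
          have h10 : C*(-α) ≤ C*|α| := mul_le_mul_of_nonneg_left (neg_le_abs α) hC0'
          have h10' : C*(-α) = -(C*α) := by ring
          linarith
        have h11 : C-α*β ≤ |C-α*β| := le_abs_self _
        have h13 : t*(C*|α|) ≤ C*|α| := by nlinarith
        have key2a : (C-α*β) + t*(C*α) ≤ K := by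
          have h14 : t*(C*α) ≤ t*(C*|α|) := mul_le_mul_of_nonneg_left h9 htpos.le
          rw [hK]; linarith
        have key2b : (C-α*β) - t*(C*α) ≤ K := by
          have h12 : t*(-(C*α)) ≤ t*(C*|α|) := mul_le_mul_of_nonneg_left h9' htpos.le
          have h12' : t*(-(C*α)) = -(t*(C*α)) := by ring
          rw [hK]; linarith
        have htt : (0:ℝ) ≤ t*t := mul_nonneg htpos.le htpos.le
        have F1 : t*(β-α) ≤ t*(t*K) := by
          have := le_trans E1 (mul_le_mul_of_nonneg_left key2a htt)
          have heq : t*t*K = t*(t*K) := by ring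
          linarith
        have F2 : t*(α-β) ≤ t*(t*K) := by
          have := le_trans E2 (mul_le_mul_of_nonneg_left key2b htt)
          have heq : t*t*K = t*(t*K) := by ring
          linarith
        have G1 := (mul_le_mul_iff_right₀ htpos).mp F1
        have G2 := (mul_le_mul_iff_right₀ htpos).mp F2
        exact abs_sub_le_iff.mpr ⟨G2, G1⟩
      by_contra hne
      have hne' : 0 < |α - β| := by
        rw [abs_pos, sub_ne_zero]
        exact fun hc => hne hc.symm
      set t := min t₀ (|α-β| / (2*K)) with htdef
      have htpos : 0 < t := lt_min ht₀pos (by positivity)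
      have hle1 := hstep t htpos (min_le_left _ _)
      have hle2 : t ≤ |α-β|/(2*K) := min_le_right _ _
      have hle3 : |α-β| ≤ (|α-β|/(2*K))*K :=
        le_trans hle1 (mul_le_mul_of_nonneg_right hle2 hK0.le)
      rw [div_mul_eq_mul_div, le_div_iff₀ (by positivity)] at hle3
      nlinarith
    have him1 : (ω w).im = 0 := state_real ω hωpos hw
    have him2 : (ω (Ψ w)).im = 0 := state_real ω hωpos (hΨsa w hw)
    apply Complex.ext
    · rw [← hβ, ← hα]; exact hreq
    · rw [him1, him2]
  -- assemble: general x
  intro x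
  have hsa : IsSelfAdjoint (x + star x) := by
    simp [IsSelfAdjoint, star_add, add_comm]
  have ksa : IsSelfAdjoint (Complex.I • (star x - x)) := by
    simp only [IsSelfAdjoint, star_smul, star_sub, star_star, Complex.star_def, Complex.conj_I]
    rw [neg_smul, ← smul_neg, neg_sub]
  have hx : x = (2⁻¹:ℂ) • (x + star x) + ((Complex.I : ℂ)/2) • (Complex.I • (star x - x)) := by
    match_scalars <;> simp [Complex.ext_iff] <;> ring
  have m1 := main_sa _ hsa
  have m2 := main_sa _ ksa
  calc ω (Ψ x)
      = (2⁻¹:ℂ) * ω (Ψ (x + star x))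
        + ((Complex.I:ℂ)/2) * ω (Ψ (Complex.I • (star x - x))) := by
        conv_lhs => rw [hx]
        simp only [map_add, map_smul, smul_eq_mul]
  _ = (2⁻¹:ℂ) * ω (x + star x) + ((Complex.I:ℂ)/2) * ω (Complex.I • (star x - x)) := by
        rw [m1, m2]
  _ = ω x := by
        conv_rhs => rw [hx]
        simp only [map_add, map_smul, smul_eq_mul]
end
end

section
/- With A, Ψ and ω as in the hypotheses (A a logmodular subalgebra of the unital C*-algebra M; Ψ : M → M a positive contractive linear projection whose range is a subalgebra of A containing the unit, multiplicative on A; ω a state of M with ω(Ψ(a)) = ω(a) for all a ∈ A): for every positive invertible element b of M one has 1 ≤ ω(Ψ(b)) · ω(b⁻¹). -/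
open scoped ComplexOrder

noncomputable section

variable {M : Type*} [CStarAlgebra M] [PartialOrder M] [StarOrderedRing M]

namespace LogmodularDetAux

lemma one_nonneg' : (0 : M) ≤ 1 := by
  simpa using star_mul_self_nonneg (1 : M)

lemma algebraMap_nonneg' {r : ℝ} (hr : 0 ≤ r) : (0 : M) ≤ algebraMap ℝ M r := by
  rw [IsScalarTower.algebraMap_apply ℝ ℂ M, Algebra.algebraMap_eq_smul_one]
  exact smul_nonneg (Complex.zero_le_real.mpr hr) one_nonneg'

lemma exists_nonneg_sub {x : M} (hx : IsSelfAdjoint x) :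
    ∃ p n : M, 0 ≤ p ∧ 0 ≤ n ∧ x = p - n := by
  refine ⟨x + algebraMap ℝ M ‖x‖, algebraMap ℝ M ‖x‖, ?_,
    algebraMap_nonneg' (norm_nonneg x), by abel⟩
  simpa using add_le_add_left hx.neg_algebraMap_norm_le_self (algebraMap ℝ M ‖x‖)

lemma exists_sa_decomp (x : M) : ∃ h k : M, IsSelfAdjoint h ∧ IsSelfAdjoint k ∧
    x = h + Complex.I • k ∧ star x = h - Complex.I • k ∧ ‖h‖ ≤ ‖x‖ ∧ ‖k‖ ≤ ‖x‖ := by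
  have h2 : star ((2:ℂ)⁻¹) = (2:ℂ)⁻¹ := by simp [Complex.star_def, map_inv₀]
  have hscal : Complex.I * ((2:ℂ)⁻¹ * -Complex.I) = (2:ℂ)⁻¹ := by
    norm_num [Complex.ext_iff]
  refine ⟨(2:ℂ)⁻¹ • (x + star x), ((2:ℂ)⁻¹ * -Complex.I) • (x - star x), ?_, ?_, ?_, ?_, ?_, ?_⟩
  · rw [IsSelfAdjoint, star_smul, star_add, star_star, h2]; module
  · rw [IsSelfAdjoint, star_smul, star_sub, star_star]
    have : star ((2:ℂ)⁻¹ * -Complex.I) = (2:ℂ)⁻¹ * Complex.I := by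
      simp [Complex.star_def]
    rw [this]; module
  · rw [smul_smul, hscal]; module
  · rw [smul_smul, hscal]; module
  · rw [norm_smul]
    have h1 : ‖((2:ℂ)⁻¹)‖ = 2⁻¹ := by simp
    rw [h1]
    have h2 : ‖x + star x‖ ≤ 2 * ‖x‖ := by
      calc ‖x + star x‖ ≤ ‖x‖ + ‖star x‖ := norm_add_le _ _
        _ = 2 * ‖x‖ := by rw [norm_star]; ring
    linarith
  · rw [norm_smul]
    have h1 : ‖((2:ℂ)⁻¹ * -Complex.I)‖ = 2⁻¹ := by simp
    rw [h1]
    have h2 : ‖x - star x‖ ≤ 2 * ‖x‖ := by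
      calc ‖x - star x‖ ≤ ‖x‖ + ‖star x‖ := norm_sub_le _ _
        _ = 2 * ‖x‖ := by rw [norm_star]; ring
    linarith

variable {N : Type*} [Ring N] [StarRing N] [PartialOrder N] [StarOrderedRing N]
  [Module ℂ N] [StarModule ℂ N]

lemma map_isSelfAdjoint (T : M →ₗ[ℂ] N) (hpos : ∀ x : M, 0 ≤ x → 0 ≤ T x)
    {x : M} (hx : IsSelfAdjoint x) : IsSelfAdjoint (T x) := by
  obtain ⟨p, n, hp, hn, rfl⟩ := exists_nonneg_sub hx
  rw [map_sub]
  exact ((hpos p hp).isSelfAdjoint).sub ((hpos n hn).isSelfAdjoint)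

lemma map_star' (T : M →ₗ[ℂ] N) (hpos : ∀ x : M, 0 ≤ x → 0 ≤ T x)
    (x : M) : T (star x) = star (T x) := by
  obtain ⟨h, k, hhsa, hksa, hxeq, hsx, -, -⟩ := exists_sa_decomp x
  rw [hsx, map_sub, map_smul]
  conv_rhs => rw [hxeq]
  rw [map_add, map_smul, star_add, star_smul,
    (map_isSelfAdjoint T hpos hhsa).star_eq, (map_isSelfAdjoint T hpos hksa).star_eq]
  simp [Complex.star_def, Complex.conj_I, sub_eq_add_neg, neg_smul]

lemma norm_one_le' : ‖(1:M)‖ ≤ 1 := by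
  have h : ‖star (1:M) * 1‖ = ‖(1:M)‖ * ‖(1:M)‖ := CStarRing.norm_star_mul_self
  rw [star_one, one_mul] at h
  nlinarith [norm_nonneg (1:M)]

lemma exists_nonneg_sub_norm {x : M} (hx : IsSelfAdjoint x) :
    ∃ p n : M, 0 ≤ p ∧ 0 ≤ n ∧ x = p - n ∧ ‖p‖ ≤ 2 * ‖x‖ ∧ ‖n‖ ≤ ‖x‖ := by
  have hn_norm : ‖algebraMap ℝ M ‖x‖‖ ≤ ‖x‖ := by
    rw [norm_algebraMap]
    calc ‖(‖x‖)‖ * ‖(1:M)‖ ≤ ‖x‖ * 1 := by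
          apply mul_le_mul _ norm_one_le' (norm_nonneg _) (norm_nonneg _)
          rw [Real.norm_of_nonneg (norm_nonneg x)]
      _ = ‖x‖ := mul_one _
  refine ⟨x + algebraMap ℝ M ‖x‖, algebraMap ℝ M ‖x‖, ?_,
    algebraMap_nonneg' (norm_nonneg x), by abel, ?_, hn_norm⟩
  · simpa using add_le_add_left hx.neg_algebraMap_norm_le_self (algebraMap ℝ M ‖x‖)
  · calc ‖x + algebraMap ℝ M ‖x‖‖ ≤ ‖x‖ + ‖algebraMap ℝ M ‖x‖‖ := norm_add_le _ _
      _ ≤ ‖x‖ + ‖x‖ := by linarith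
      _ = 2 * ‖x‖ := by ring

section State

variable (ω : M →ₗ[ℂ] ℂ)

lemma omega_algebraMap (hωone : ω 1 = 1) (r : ℝ) : ω (algebraMap ℝ M r) = (r : ℂ) := by
  rw [IsScalarTower.algebraMap_apply ℝ ℂ M, Algebra.algebraMap_eq_smul_one, map_smul, hωone,
    smul_eq_mul, mul_one]
  norm_cast

lemma omega_nonneg_bound (hωpos : ∀ x : M, 0 ≤ x → 0 ≤ ω x) (hωone : ω 1 = 1)
    {p : M} (hp : 0 ≤ p) : ‖ω p‖ ≤ ‖p‖ := by
  obtain ⟨hre, him⟩ := Complex.nonneg_iff.mp (hωpos p hp)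
  have h1 : ω p ≤ ((‖p‖ : ℝ) : ℂ) := by
    have hle : p ≤ algebraMap ℝ M ‖p‖ := IsSelfAdjoint.le_algebraMap_norm_self hp.isSelfAdjoint
    have h2 : 0 ≤ ω (algebraMap ℝ M ‖p‖ - p) := hωpos _ (sub_nonneg.mpr hle)
    rw [map_sub] at h2
    have := sub_nonneg.mp h2
    rwa [omega_algebraMap ω hωone] at this
  have heq : ω p = ((ω p).re : ℂ) := Complex.ext rfl (by simp [← him])
  rw [heq, Complex.norm_real]
  rw [Real.norm_of_nonneg hre]
  have := (Complex.le_def.mp h1).1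
  simpa using this

lemma omega_bound (hωpos : ∀ x : M, 0 ≤ x → 0 ≤ ω x) (hωone : ω 1 = 1) (x : M) :
    ‖ω x‖ ≤ 6 * ‖x‖ := by
  have hsa : ∀ y : M, IsSelfAdjoint y → ‖ω y‖ ≤ 3 * ‖y‖ := by
    intro y hy
    obtain ⟨p, n, hp, hn, heq, hpn, hnn⟩ := exists_nonneg_sub_norm hy
    calc ‖ω y‖ = ‖ω p - ω n‖ := by rw [heq, map_sub]
      _ ≤ ‖ω p‖ + ‖ω n‖ := norm_sub_le _ _
      _ ≤ ‖p‖ + ‖n‖ := add_le_add (omega_nonneg_bound ω hωpos hωone hp)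
          (omega_nonneg_bound ω hωpos hωone hn)
      _ ≤ 3 * ‖y‖ := by linarith
  obtain ⟨h, k, hh, hk, hx, -, hhn, hkn⟩ := exists_sa_decomp x
  calc ‖ω x‖ = ‖ω h + Complex.I * ω k‖ := by rw [hx, map_add, map_smul, smul_eq_mul]
    _ ≤ ‖ω h‖ + ‖Complex.I * ω k‖ := norm_add_le _ _
    _ = ‖ω h‖ + ‖ω k‖ := by rw [norm_mul, Complex.norm_I, one_mul]
    _ ≤ 3 * ‖h‖ + 3 * ‖k‖ := add_le_add (hsa h hh) (hsa k hk)
    _ ≤ 6 * ‖x‖ := by linarith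

lemma omega_cs (hωpos : ∀ x : M, 0 ≤ x → 0 ≤ ω x)
    (hωstar : ∀ x : M, ω (star x) = star (ω x)) {y z : M}
    (hyz : ω (star y * z) = 1) :
    1 ≤ (ω (star y * y)).re * (ω (star z * z)).re := by
  set r := (ω (star y * y)).re with hr
  set s := (ω (star z * z)).re with hs
  have hr0 : 0 ≤ r := (Complex.nonneg_iff.mp (hωpos _ (star_mul_self_nonneg y))).1
  have hs0 : 0 ≤ s := (Complex.nonneg_iff.mp (hωpos _ (star_mul_self_nonneg z))).1
  have hzy : ω (star z * y) = 1 := by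
    have h1 : star z * y = star (star y * z) := by rw [star_mul, star_star]
    rw [h1, hωstar, hyz, star_one]
  have key : ∀ t : ℝ, 0 ≤ t ^ 2 * r - 2 * t + s := by
    intro t
    have h0 := hωpos _ (star_mul_self_nonneg (z - (t : ℂ) • y))
    have hstar_c : star ((t : ℂ)) = (t : ℂ) := by
      simp [Complex.star_def, Complex.conj_ofReal]
    have hexp : star (z - (t : ℂ) • y) * (z - (t : ℂ) • y)
        = star z * z - (t : ℂ) • (star z * y)
          - ((t : ℂ) • (star y * z) - (((t : ℝ) * t : ℝ) : ℂ) • (star y * y)) := by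
      simp only [star_sub, star_smul, hstar_c, sub_mul, mul_sub, smul_sub, smul_add,
        smul_mul_assoc, mul_smul_comm, smul_smul]
      push_cast
      abel
    have hval : ω (star (z - (t : ℂ) • y) * (z - (t : ℂ) • y))
        = ω (star z * z) + (((t * t : ℝ)) : ℂ) * ω (star y * y) - (((2 * t : ℝ)) : ℂ) := by
      rw [hexp, map_sub, map_sub, map_sub, map_smul, map_smul, map_smul, hzy, hyz]
      push_cast
      simp [smul_eq_mul]
      ring
    rw [hval] at h0
    have hre := (Complex.nonneg_iff.mp h0).1
    have : 0 ≤ s + t * t * r - 2 * t := by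
      simpa [Complex.add_re, Complex.sub_re, Complex.re_ofReal_mul, Complex.ofReal_re]
        using hre
    nlinarith [this]
  have hrpos : 0 < r := by
    rcases hr0.lt_or_eq with h | h
    · exact h
    · exfalso
      have k1 := key ((s + 1) / 2)
      nlinarith [k1]
  have k2 := key (1 / r)
  have hsq : (1 / r) ^ 2 * r = 1 / r := by
    field_simp
  rw [hsq] at k2
  have h3 : 1 / r ≤ s := by linarith
  calc (1 : ℝ) = r * (1 / r) := by field_simp
    _ ≤ r * s := mul_le_mul_of_nonneg_left h3 hr0

end State

end LogmodularDetAux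

/-- If `A` is a logmodular subalgebra of a unital C*-algebra `M`, `Ψ : M → M` is a positive
contractive linear projection whose range is a subalgebra of `A` containing the unit, and which
is multiplicative on `A`, and `ω` is a state of `M` with `ω ∘ Ψ = ω` on `A`, then for every
positive invertible `b ∈ M` one has `1 ≤ ω(Ψ(b)) * ω(b⁻¹)`. -/
theorem logmodular_det_inequality
    (A : Subalgebra ℂ M) (hA : IsLogmodular A)
    (Ψ : M →L[ℂ] M)
    (hΨpos : ∀ x : M, 0 ≤ x → 0 ≤ Ψ x)
    (hΨcontr : ∀ x : M, ‖Ψ x‖ ≤ ‖x‖)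
    (hΨproj : ∀ x : M, Ψ (Ψ x) = Ψ x)
    (hΨrange_sub : Set.range Ψ ⊆ (A : Set M))
    (hΨone : (1 : M) ∈ Set.range Ψ)
    (hΨrange_mul : ∀ x ∈ Set.range Ψ, ∀ y ∈ Set.range Ψ, x * y ∈ Set.range Ψ)
    (hΨmult : ∀ a ∈ A, ∀ b ∈ A, Ψ (a * b) = Ψ a * Ψ b)
    (ω : M →ₗ[ℂ] ℂ)
    (hωpos : ∀ x : M, 0 ≤ x → 0 ≤ ω x) (hωone : ω 1 = 1)
    (hωA : ∀ a ∈ A, ω (Ψ a) = ω a) :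
    ∀ b : M, 0 ≤ b → IsUnit b → 1 ≤ ω (Ψ b) * ω (Ring.inverse b) := by
  intro b hb0 hbU
  have h10 : (1 : M) ≠ 0 := by
    intro h
    rw [h, map_zero] at hωone
    exact one_ne_zero hωone.symm
  haveI : Nontrivial M := ⟨⟨1, 0, h10⟩⟩
  have hωstar : ∀ x : M, ω (star x) = star (ω x) :=
    LogmodularDetAux.map_star' ω hωpos
  have hΨstar : ∀ x : M, Ψ (star x) = star (Ψ x) :=
    LogmodularDetAux.map_star' (Ψ : M →ₗ[ℂ] M) hΨpos
  have hΨ1 : Ψ (1 : M) = 1 := by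
    obtain ⟨y, hy⟩ := hΨone
    conv_lhs => rw [← hy]
    rw [hΨproj, hy]
  have hωcont : Continuous fun x : M => ω x :=
    AddMonoidHomClass.continuous_of_bound ω 6 (LogmodularDetAux.omega_bound ω hωpos hωone)
  set S : Set M := {x : M | ∃ a ∈ A, ∃ a' ∈ A, a * a' = 1 ∧ a' * a = 1 ∧ x = star a * a}
    with hSdef
  have hkey : ∀ x ∈ S, 1 ≤ ω (Ψ x) * ω (Ring.inverse x) := by
    rintro x ⟨a, haA, a', ha'A, haa', ha'a, rfl⟩
    have hdA : Ψ a ∈ A := hΨrange_sub ⟨a, rfl⟩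
    have hd'A : Ψ a' ∈ A := hΨrange_sub ⟨a', rfl⟩
    have hsdA : star (Ψ a) ∈ A := hΨrange_sub ⟨star a, hΨstar a⟩
    have hΨd : Ψ (Ψ a) = Ψ a := hΨproj a
    have hd'd : Ψ a' * Ψ a = 1 := by rw [← hΨmult a' ha'A a haA, ha'a, hΨ1]
    have hω1 : ω (a' * Ψ a) = 1 := by
      rw [← hωA (a' * Ψ a) (mul_mem ha'A hdA), hΨmult a' ha'A (Ψ a) hdA, hΨd, hd'd, hωone]
    -- Cauchy-Schwarz
    have hyz : ω (star (star a') * Ψ a) = 1 := by rw [star_star]; exact hω1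
    have hcs := LogmodularDetAux.omega_cs ω hωpos hωstar hyz
    rw [star_star] at hcs
    -- hcs : 1 ≤ (ω (a' * star a')).re * (ω (star (Ψ a) * Ψ a)).re
    -- expansion of Ψ (star a * a)
    have hx0A : a - Ψ a ∈ A := A.sub_mem haA hdA
    have hΨx0 : Ψ (a - Ψ a) = 0 := by rw [map_sub, hΨproj, sub_self]
    have hexp : star a * a = star (Ψ a) * Ψ a + (star (Ψ a) * (a - Ψ a)
        + (star (a - Ψ a) * Ψ a + star (a - Ψ a) * (a - Ψ a))) := by
      have h1 : a = Ψ a + (a - Ψ a) := by abel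
      conv_lhs => rw [h1]
      rw [star_add, add_mul, mul_add, mul_add]
      abel
    have hcross1 : Ψ (star (Ψ a) * (a - Ψ a)) = 0 := by
      rw [hΨmult _ hsdA _ hx0A, hΨx0, mul_zero]
    have hcross2 : Ψ (star (a - Ψ a) * Ψ a) = 0 := by
      have h1 : star (a - Ψ a) * Ψ a = star (star (Ψ a) * (a - Ψ a)) := by
        rw [star_mul, star_star]
      rw [h1, hΨstar, hcross1, star_zero]
    have hΨeq : Ψ (star a * a) = Ψ (star (Ψ a) * Ψ a) + Ψ (star (a - Ψ a) * (a - Ψ a)) := by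
      rw [hexp, map_add, map_add, map_add, hcross1, hcross2]
      simp
    have hω_dd : ω (Ψ (star (Ψ a) * Ψ a)) = ω (star (Ψ a) * Ψ a) :=
      hωA _ (mul_mem hsdA hdA)
    have hpos_extra : 0 ≤ ω (Ψ (star (a - Ψ a) * (a - Ψ a))) :=
      hωpos _ (hΨpos _ (star_mul_self_nonneg _))
    have hn1 : 0 ≤ ω (Ψ (star a * a)) := hωpos _ (hΨpos _ (star_mul_self_nonneg a))
    have hn2 : 0 ≤ ω (a' * star a') := by
      have h1 : a' * star a' = star (star a') * star a' := by rw [star_star]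
      rw [h1]; exact hωpos _ (star_mul_self_nonneg _)
    have hr23 : (ω (star (Ψ a) * Ψ a)).re ≤ (ω (Ψ (star a * a))).re := by
      have h1 : ω (Ψ (star a * a))
          = ω (star (Ψ a) * Ψ a) + ω (Ψ (star (a - Ψ a) * (a - Ψ a))) := by
        rw [hΨeq, map_add, hω_dd]
      rw [h1, Complex.add_re]
      have h2 := (Complex.nonneg_iff.mp hpos_extra).1
      linarith
    have hn2re : 0 ≤ (ω (a' * star a')).re := (Complex.nonneg_iff.mp hn2).1
    have hfinal_re : 1 ≤ (ω (Ψ (star a * a))).re * (ω (a' * star a')).re := by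
      have h1 := mul_le_mul_of_nonneg_left hr23 hn2re
      nlinarith [hcs, h1]
    -- compute the inverse
    have hinv : Ring.inverse (star a * a) = a' * star a' := by
      have h1 : (star a * a) * (a' * star a') = 1 := by
        rw [mul_assoc, ← mul_assoc a a', haa', one_mul, ← star_mul, ha'a, star_one]
      have h2 : (a' * star a') * (star a * a) = 1 := by
        rw [mul_assoc, ← mul_assoc (star a') (star a) a, ← star_mul, haa', star_one,
          one_mul, ha'a]
      exact Ring.inverse_unit ⟨star a * a, a' * star a', h1, h2⟩
    rw [hinv, Complex.le_def]
    have hzim : (ω (Ψ (star a * a))).im = 0 := ((Complex.nonneg_iff.mp hn1).2).symm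
    have hwim : (ω (a' * star a')).im = 0 := ((Complex.nonneg_iff.mp hn2).2).symm
    constructor
    · rw [Complex.mul_re, hzim, hwim]
      simpa using hfinal_re
    · rw [Complex.mul_im, hzim, hwim]
      simp
  have hbS : b ∈ closure S := hA b hb0 hbU
  have hcont : ContinuousAt (fun x : M => ω (Ψ x) * ω (Ring.inverse x)) b := by
    have h1 : Continuous fun x : M => ω (Ψ x) := hωcont.comp Ψ.continuous
    have h2 : ContinuousAt Ring.inverse b := by
      have h3 := NormedRing.inverse_continuousAt hbU.unit
      rwa [IsUnit.unit_spec] at h3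
    exact h1.continuousAt.mul (hωcont.continuousAt.comp h2)
  have hclosed : IsClosed {z : ℂ | 1 ≤ z} := by
    have h1 : {z : ℂ | 1 ≤ z} = Complex.re ⁻¹' Set.Ici 1 ∩ Complex.im ⁻¹' {0} := by
      ext z
      simp [Complex.le_def, eq_comm]
    rw [h1]
    exact (isClosed_Ici.preimage Complex.continuous_re).inter
      (isClosed_singleton.preimage Complex.continuous_im)
  haveI : (nhdsWithin b S).NeBot := mem_closure_iff_nhdsWithin_neBot.mp hbS
  have htend : Filter.Tendsto (fun x : M => ω (Ψ x) * ω (Ring.inverse x)) (nhdsWithin b S)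
      (nhds (ω (Ψ b) * ω (Ring.inverse b))) := hcont.continuousWithinAt
  have hev : ∀ᶠ x in nhdsWithin b S, (fun x : M => ω (Ψ x) * ω (Ring.inverse x)) x ∈
      {z : ℂ | 1 ≤ z} := by
    filter_upwards [self_mem_nhdsWithin] with x hx using hkey x hx
  exact hclosed.mem_of_tendsto htend hev
end
end

section
/- Let M be a unital C*-algebra, let φ and ψ be states of M, and let u ∈ M be self-adjoint. If φ(exp(tu)) · ψ(exp(−tu)) ≥ 1 for every real number t, then φ(u) = ψ(u). -/
open scoped ComplexOrder

noncomputable section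

/-- A positive linear functional is real on self-adjoint elements. -/
lemma posfun_im_eq_zero
    {M : Type*} [CStarAlgebra M] [PartialOrder M] [StarOrderedRing M]
    (φ : M →ₗ[ℂ] ℂ) (hpos : ∀ x : M, 0 ≤ x → 0 ≤ φ x)
    {a : M} (ha : IsSelfAdjoint a) : (φ a).im = 0 := by
  have h1 : 0 ≤ φ (a⁺) := hpos _ (CFC.posPart_nonneg a)
  have h2 : 0 ≤ φ (a⁻) := hpos _ (CFC.negPart_nonneg a)
  rw [Complex.le_def] at h1 h2
  have hd := CFC.posPart_sub_negPart a ha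
  calc (φ a).im = (φ (a⁺ - a⁻)).im := by rw [hd]
    _ = (φ (a⁺)).im - (φ (a⁻)).im := by rw [map_sub, Complex.sub_im]
    _ = 0 := by rw [← h1.2, ← h2.2]; ring

/-- Real-part bound for a unital positive functional on self-adjoint elements. -/
lemma posfun_re_le
    {M : Type*} [CStarAlgebra M] [PartialOrder M] [StarOrderedRing M]
    (φ : M →ₗ[ℂ] ℂ) (hpos : ∀ x : M, 0 ≤ x → 0 ≤ φ x) (hone : φ 1 = 1)
    {a : M} (ha : IsSelfAdjoint a) : |(φ a).re| ≤ ‖a‖ := by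
  have halg : ∀ r : ℝ, φ (algebraMap ℝ M r) = (r : ℂ) := by
    intro r
    rw [IsScalarTower.algebraMap_apply ℝ ℂ M, Algebra.algebraMap_eq_smul_one, map_smul, hone,
      smul_eq_mul, mul_one, Complex.coe_algebraMap]
  have h1 : 0 ≤ φ (algebraMap ℝ M ‖a‖ - a) := by
    refine hpos _ ?_
    rw [sub_nonneg]
    exact ha.le_algebraMap_norm_self
  have h2 : 0 ≤ φ (a - (-(algebraMap ℝ M ‖a‖))) := by
    refine hpos _ ?_
    rw [sub_nonneg]
    exact ha.neg_algebraMap_norm_le_self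
  rw [map_sub, halg, Complex.le_def] at h1
  rw [map_sub, map_neg, halg, Complex.le_def] at h2
  simp only [Complex.zero_re, Complex.sub_re, Complex.ofReal_re, Complex.neg_re] at h1 h2
  rw [abs_le]
  constructor <;> linarith [h1.1, h2.1]

/-- A unital positive functional is bounded. -/
lemma posfun_bound
    {M : Type*} [CStarAlgebra M] [PartialOrder M] [StarOrderedRing M]
    (φ : M →ₗ[ℂ] ℂ) (hpos : ∀ x : M, 0 ≤ x → 0 ≤ φ x) (hone : φ 1 = 1)
    (x : M) : ‖φ x‖ ≤ 2 * ‖x‖ := by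
  have hre : ∀ a : M, IsSelfAdjoint a → ‖φ a‖ ≤ ‖a‖ := by
    intro a ha
    have him := posfun_im_eq_zero φ hpos ha
    have : φ a = ((φ a).re : ℂ) := by
      exact Complex.ext rfl (by simp [him])
    rw [this, Complex.norm_real, Real.norm_eq_abs]
    exact posfun_re_le φ hpos hone ha
  have hdecomp : x = (realPart x : M) + Complex.I • (imaginaryPart x : M) :=
    (realPart_add_I_smul_imaginaryPart x).symm
  have h1 : ‖(realPart x : M)‖ ≤ ‖x‖ := by
    rw [realPart_apply_coe]
    calc ‖(2 : ℝ)⁻¹ • (x + star x)‖ = (2:ℝ)⁻¹ * ‖x + star x‖ := by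
          rw [norm_smul, Real.norm_eq_abs]; norm_num
      _ ≤ (2:ℝ)⁻¹ * (‖x‖ + ‖star x‖) := by
          gcongr; exact norm_add_le _ _
      _ = ‖x‖ := by rw [norm_star]; ring
  have h2 : ‖(imaginaryPart x : M)‖ ≤ ‖x‖ := by
    rw [imaginaryPart_apply_coe]
    calc ‖-Complex.I • (2 : ℝ)⁻¹ • (x - star x)‖
        = ‖(-Complex.I : ℂ)‖ * ((2:ℝ)⁻¹ * ‖x - star x‖) := by
          rw [norm_smul, norm_smul, Real.norm_eq_abs]; norm_num
      _ ≤ ‖x‖ := by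
          have hI : ‖(-Complex.I : ℂ)‖ = 1 := by simp
          have h' : ‖x - star x‖ ≤ ‖x‖ + ‖x‖ := by
            calc ‖x - star x‖ ≤ ‖x‖ + ‖star x‖ := norm_sub_le _ _
              _ = ‖x‖ + ‖x‖ := by rw [norm_star]
          rw [hI, one_mul]
          linarith
  calc ‖φ x‖ = ‖φ (realPart x : M) + Complex.I * φ (imaginaryPart x : M)‖ := by
        rw [← smul_eq_mul, ← map_smul]
        conv_lhs => rw [hdecomp]
        rw [map_add]
    _ ≤ ‖φ (realPart x : M)‖ + ‖Complex.I * φ (imaginaryPart x : M)‖ := norm_add_le _ _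
    _ ≤ ‖(realPart x : M)‖ + ‖(imaginaryPart x : M)‖ := by
        rw [norm_mul, Complex.norm_I, one_mul]
        exact add_le_add (hre _ (realPart x).2) (hre _ (imaginaryPart x).2)
    _ ≤ 2 * ‖x‖ := by linarith

/-- Let `M` be a unital C*-algebra, `φ` and `ψ` states of `M`, and `u ∈ M` self-adjoint.
If `φ(exp(t • u)) * ψ(exp(-t • u)) ≥ 1` for every real `t`, then `φ(u) = ψ(u)`. -/
theorem state_eq_of_exp_inequality
    {M : Type*} [CStarAlgebra M] [PartialOrder M] [StarOrderedRing M]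
    (φ ψ : M →ₗ[ℂ] ℂ)
    (hφpos : ∀ x : M, 0 ≤ x → 0 ≤ φ x) (hφone : φ 1 = 1)
    (hψpos : ∀ x : M, 0 ≤ x → 0 ≤ ψ x) (hψone : ψ 1 = 1)
    (u : M) (hu : IsSelfAdjoint u)
    (h : ∀ t : ℝ, 1 ≤ φ (NormedSpace.exp (t • u)) * ψ (NormedSpace.exp ((-t) • u))) :
    φ u = ψ u := by
  have hexp : (NormedSpace.exp : M → M) = NormedSpace.exp :=
    rfl
  -- self-adjointness of the exponentials
  have hsa : ∀ t : ℝ, IsSelfAdjoint (NormedSpace.exp (t • u)) := by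
    intro t
    have h1 : IsSelfAdjoint (t • u) := IsSelfAdjoint.smul (star_trivial (t : ℝ)) hu
    exact h1.exp
  -- continuous versions of φ and ψ composed with the real part
  let Φ : M →L[ℂ] ℂ := φ.mkContinuous 2 (posfun_bound φ hφpos hφone)
  let Ψ : M →L[ℂ] ℂ := ψ.mkContinuous 2 (posfun_bound ψ hψpos hψone)
  let Lφ : M →L[ℝ] ℝ := Complex.reCLM.comp (Φ.restrictScalars ℝ)
  let Lψ : M →L[ℝ] ℝ := Complex.reCLM.comp (Ψ.restrictScalars ℝ)
  set F : ℝ → ℝ := fun t => (φ (NormedSpace.exp (t • u))).re with hF_def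
  set G : ℝ → ℝ := fun t => (ψ (NormedSpace.exp ((-t) • u))).re with hG_def
  -- derivative of t ↦ exp(t • u) at 0 is u
  have hd : HasDerivAt (fun t : ℝ => NormedSpace.exp (t • u)) u 0 := by
    have := hasDerivAt_exp_smul_const (𝕂 := ℝ) u (0 : ℝ)
    simpa using this
  have hF : HasDerivAt F ((φ u).re) 0 := by
    have := Lφ.hasFDerivAt.comp_hasDerivAt 0 hd
    simpa [hF_def, Lφ, Φ, Function.comp_def] using this
  have hGaux : HasDerivAt (fun t : ℝ => (ψ (NormedSpace.exp (t • u))).re) ((ψ u).re) 0 := by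
    have := Lψ.hasFDerivAt.comp_hasDerivAt 0 hd
    simpa [Lψ, Ψ, Function.comp_def] using this
  have hG : HasDerivAt G (-(ψ u).re) 0 := by
    have hneg : HasDerivAt (fun t : ℝ => -t) (-1 : ℝ) 0 := hasDerivAt_neg 0
    have hGaux' : HasDerivAt (fun t : ℝ => (ψ (NormedSpace.exp (t • u))).re) ((ψ u).re)
        ((fun t : ℝ => -t) 0) := by simpa using hGaux
    have := hGaux'.comp 0 hneg
    simpa [hG_def, Function.comp_def, neg_smul, mul_neg_one] using this
  -- value at 0
  have hF0 : F 0 = 1 := by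
    simp [hF_def, NormedSpace.exp_zero, hφone]
  have hG0 : G 0 = 1 := by
    simp [hG_def, NormedSpace.exp_zero, hψone]
  -- the product has a local minimum at 0
  have hmin : IsLocalMin (fun t => F t * G t) 0 := by
    apply Filter.Eventually.of_forall
    intro t
    have ht := h t
    rw [hexp] at ht
    have him1 := posfun_im_eq_zero φ hφpos (hsa t)
    have him2 := posfun_im_eq_zero ψ hψpos (hsa (-t))
    rw [Complex.le_def] at ht
    have hre : (φ (NormedSpace.exp (t • u)) * ψ (NormedSpace.exp ((-t) • u))).re
        = F t * G t := by
      rw [Complex.mul_re, him1, him2]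
      simp [hF_def, hG_def]
    have h1 : (1 : ℝ) ≤ F t * G t := by
      have := ht.1
      rwa [Complex.one_re, hre] at this
    simp only [hF0, hG0, one_mul]
    linarith
  have hprod : HasDerivAt (fun t => F t * G t) ((φ u).re * G 0 + F 0 * (-(ψ u).re)) 0 :=
    hF.mul hG
  have hzero : (φ u).re * G 0 + F 0 * (-(ψ u).re) = 0 := hmin.hasDerivAt_eq_zero hprod
  rw [hF0, hG0] at hzero
  have hre : (φ u).re = (ψ u).re := by linarith
  exact Complex.ext hre (by
    rw [posfun_im_eq_zero φ hφpos hu, posfun_im_eq_zero ψ hψpos hu])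
end
end

section
/- A tracial subalgebra A of M with conditional factorization has the Φ-state property: every state ω of M satisfying ω(Φ(a)) = ω(a) for all a ∈ A satisfies ω(Φ(x)) = ω(x) for all x ∈ M. -/
open scoped ComplexOrder

noncomputable section

variable {H : Type*} [NormedAddCommGroup H] [InnerProductSpace ℂ H] [CompleteSpace H]
variable {M : Type*} [CStarAlgebra M] [PartialOrder M] [StarOrderedRing M]

/-- The image of an element of `M` in `B(H)` endowed with the weak operator topology. -/
def wot (ι : M →⋆ₐ[ℂ] (H →L[ℂ] H)) (x : M) : H →WOT[ℂ] H :=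
  ContinuousLinearMapWOT.ofCLM (ι x)

/-- A functional on `M` is normal if its restriction to the closed unit ball of `M` is
continuous for the weak operator topology. -/
def IsNormalFunctional (ι : M →⋆ₐ[ℂ] (H →L[ℂ] H)) (ω : M → ℂ) : Prop :=
  @Continuous {x : M // ‖x‖ ≤ 1} ℂ
    (TopologicalSpace.induced (fun x => wot ι (x : M)) inferInstance) _
    (fun x => ω (x : M))

/-- A map `M → M` is normal if its restriction to the closed unit ball of `M` is continuous
from the weak operator topology to the weak operator topology. -/
def IsNormalMap (ι : M →⋆ₐ[ℂ] (H →L[ℂ] H)) (Φ : M → M) : Prop :=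
  @Continuous {x : M // ‖x‖ ≤ 1} (H →WOT[ℂ] H)
    (TopologicalSpace.induced (fun x => wot ι (x : M)) inferInstance) _
    (fun x => wot ι (Φ (x : M)))

/-- A tracial subalgebra `A` of the von Neumann algebra `M` (faithfully realized via the
isometric unital `*`-embedding `ι` as a WOT-closed `*`-subalgebra of `B(H)`), together with a
faithful normal tracial state `τ` and the `τ`-preserving conditional expectation `Φ` of `M`
onto the diagonal `D = A ∩ A*`, which is multiplicative on `A`. -/
structure TracialSubalgebra (ι : M →⋆ₐ[ℂ] (H →L[ℂ] H)) where
  ι_isometry : Isometry ι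
  M_wotClosed : IsClosed (Set.range fun x : M => wot ι x)
  τ : M →L[ℂ] ℂ
  τ_pos : ∀ x : M, 0 ≤ x → 0 ≤ τ x
  τ_one : τ 1 = 1
  τ_trace : ∀ x y : M, τ (x * y) = τ (y * x)
  τ_faithful : ∀ x : M, τ (star x * x) = 0 → x = 0
  τ_normal : IsNormalFunctional ι τ
  A : Subalgebra ℂ M
  A_wotClosed : IsClosed ((fun x => wot ι x) '' (A : Set M))
  Φ : M →L[ℂ] M
  Φ_one : Φ 1 = 1
  Φ_pos : ∀ x : M, 0 ≤ x → 0 ≤ Φ x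
  Φ_idem : ∀ x : M, Φ (Φ x) = Φ x
  Φ_range : Set.range Φ = {x : M | x ∈ A ∧ star x ∈ A}
  Φ_bimod : ∀ d x d' : M, d ∈ A → star d ∈ A → d' ∈ A → star d' ∈ A →
      Φ (d * x * d') = d * Φ x * d'
  Φ_normal : IsNormalMap ι Φ
  τ_comp_Φ : ∀ x : M, τ (Φ x) = τ x
  Φ_mult : ∀ a b : M, a ∈ A → b ∈ A → Φ (a * b) = Φ a * Φ b

namespace TracialSubalgebra

variable {ι : M →⋆ₐ[ℂ] (H →L[ℂ] H)} (T : TracialSubalgebra ι)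

/-- The ideal `A₀ = A ∩ ker Φ`, as a set. -/
def Azero : Set M := {a : M | a ∈ T.A ∧ T.Φ a = 0}

/-- The diagonal `D = A ∩ A*`, as a set. -/
def diag : Set M := {x : M | x ∈ T.A ∧ star x ∈ T.A}

/-- The subspace `A + A*`, as a set. -/
def selfAdjSum : Set M := {x : M | ∃ a ∈ T.A, ∃ b ∈ T.A, x = a + star b}

/-- `A` is maximal subdiagonal if `A + A*` is dense in `M` for the weak operator topology. -/
def MaxSubdiagonal : Prop :=
  ∀ x : M, wot ι x ∈ closure ((fun y => wot ι y) '' T.selfAdjSum)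

end TracialSubalgebra

section PhiStateAuxSec
namespace PhiStateAux
variable {M : Type*} [CStarAlgebra M] [PartialOrder M] [StarOrderedRing M]


omit [PartialOrder M] [StarOrderedRing M] in
lemma isUnit_of_left_right {b x x' : M} (h1 : b * x = 1) (h2 : x' * b = 1) : IsUnit b := by
  have hx : x' = x := by rw [← mul_one x', ← h1, ← mul_assoc, h2, one_mul]
  exact ⟨⟨b, x, h1, hx ▸ h2⟩, rfl⟩

section omega
variable (ω : M →ₗ[ℂ] ℂ) (hpos : ∀ x : M, 0 ≤ x → 0 ≤ ω x)

include hpos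

lemma omega_real {y : M} (hy : IsSelfAdjoint y) : ω y = ((ω y).re : ℂ) := by
  have h1 := hpos _ (CFC.posPart_nonneg y)
  have h2 := hpos _ (CFC.negPart_nonneg y)
  rw [Complex.nonneg_iff] at h1 h2
  have hd : ω y = ω (y⁺) - ω (y⁻) := by
    rw [← map_sub]
    congr 1
    exact (CFC.posPart_sub_negPart y hy).symm
  apply Complex.ext <;> simp [hd, ← h1.2, ← h2.2]

lemma omega_star (x : M) : ω (star x) = starRingEnd ℂ (ω x) := by
  have hp : IsSelfAdjoint (x + star x) := by
    rw [IsSelfAdjoint, star_add, star_star, add_comm]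
  have hq : IsSelfAdjoint (Complex.I • (star x - x)) := by
    rw [IsSelfAdjoint, star_smul, star_sub, star_star, Complex.star_def, Complex.conj_I,
      neg_smul, ← smul_neg, neg_sub]
  have h1 := omega_real ω hpos hp
  have h2 := omega_real ω hpos hq
  rw [map_add] at h1
  rw [map_smul, map_sub] at h2
  have e1 := congrArg Complex.im h1
  have e2 := congrArg Complex.im h2
  simp only [Complex.add_im, Complex.ofReal_im, smul_eq_mul, Complex.mul_im,
    Complex.sub_re, Complex.sub_im, Complex.I_re, Complex.I_im, zero_mul, one_mul,
    zero_add, add_zero] at e1 e2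
  apply Complex.ext <;> simp only [Complex.conj_re, Complex.conj_im] <;> linarith

lemma omega_mono {x y : M} (hxy : x ≤ y) : (ω x).re ≤ (ω y).re := by
  have := hpos (y - x) (sub_nonneg.mpr hxy)
  rw [map_sub, Complex.nonneg_iff] at this
  simpa [sub_nonneg] using this.1

lemma omega_cs (x y : M) :
    ‖ω (star x * y)‖ ^ 2 ≤ (ω (star x * x)).re * (ω (star y * y)).re := by
  set B := ω (star x * y) with hB
  set X := ω (star x * x) with hX
  set Y := ω (star y * y) with hY
  have hXre : 0 ≤ X.re := by
    have := hpos _ (star_mul_self_nonneg x); rw [Complex.nonneg_iff] at this; exact this.1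
  have hYre : 0 ≤ Y.re := by
    have := hpos _ (star_mul_self_nonneg y); rw [Complex.nonneg_iff] at this; exact this.1
  by_cases hB0 : B = 0
  · rw [hB0]; simpa using mul_nonneg hXre hYre
  set nB := Complex.normSq B with hnB
  have hnBpos : 0 < nB := by rwa [hnB, Complex.normSq_pos]
  have key : ∀ s : ℝ, 0 ≤ (X.re * nB) * (s * s) + (-2 * nB) * s + Y.re := by
    intro s
    set c : ℂ := -((s:ℂ) * B) with hc
    have hE := hpos _ (star_mul_self_nonneg (c • x + y))
    have hexp : star (c • x + y) * (c • x + y)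
        = (star c * c) • (star x * x) + star c • (star x * y)
          + c • (star y * x) + star y * y := by
      rw [star_add, star_smul, add_mul, mul_add, mul_add]
      rw [smul_mul_assoc, smul_mul_assoc, mul_smul_comm, mul_smul_comm, smul_smul]
      abel
    rw [hexp] at hE
    simp only [map_add, map_smul, smul_eq_mul] at hE
    have hyx : ω (star y * x) = starRingEnd ℂ B := by
      rw [hB, ← omega_star ω hpos (star x * y)]
      rw [star_mul, star_star]
    rw [hyx, ← hB, ← hX, ← hY] at hE
    have hsc : star c = -((s:ℂ) * starRingEnd ℂ B) := by
      rw [hc, star_neg, star_mul', Complex.star_def, Complex.conj_ofReal]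
    have e1 : star c * c = (((s * s) * nB : ℝ) : ℂ) := by
      rw [hsc, hc, hnB]
      push_cast
      rw [← Complex.mul_conj]
      ring
    have e2 : star c * B = ((-(s * nB) : ℝ) : ℂ) := by
      rw [hsc, hnB]
      push_cast
      rw [← Complex.mul_conj]
      ring
    have e3 : c * starRingEnd ℂ B = ((-(s * nB) : ℝ) : ℂ) := by
      rw [hc, hnB]
      push_cast
      rw [← Complex.mul_conj]
      ring
    rw [e1, e2, e3, Complex.nonneg_iff] at hE
    have := hE.1
    simp only [Complex.add_re, Complex.mul_re, Complex.ofReal_re, Complex.ofReal_im,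
      zero_mul, sub_zero] at this
    ring_nf at this ⊢
    linarith
  have hdisc := discrim_le_zero key
  rw [discrim] at hdisc
  have habs : ‖B‖ ^ 2 = nB := by rw [hnB, Complex.sq_norm]
  rw [habs]
  nlinarith [hdisc, hnBpos]

end omega

lemma flip_inverse (τ : M →L[ℂ] ℂ)
    (hτtr : ∀ x y : M, τ (x * y) = τ (y * x))
    (hτf : ∀ x : M, τ (star x * x) = 0 → x = 0)
    (hτ1 : τ 1 = 1) {u v : M} (huv : u * v = 1) : v * u = 1 := by
  have h1M : (0:M) ≤ 1 := by simpa using star_mul_self_nonneg (1:M)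
  set N : ℝ := ‖star u * u‖ with hN
  have hsv : star v * star u = 1 := by rw [← star_mul, huv, star_one]
  have hlhs : star v * (star u * u) * v = 1 := by
    rw [show star v * (star u * u) * v = (star v * star u) * (u * v) by noncomm_ring,
      hsv, huv, one_mul]
  have hbound : star u * u ≤ algebraMap ℝ M N :=
    IsSelfAdjoint.le_algebraMap_norm_self ((star_mul_self_nonneg u).isSelfAdjoint)
  have hconj := star_left_conjugate_le_conjugate hbound v
  rw [hlhs, Algebra.algebraMap_eq_smul_one, mul_smul_comm, mul_one, smul_mul_assoc] at hconj
  -- hconj : 1 ≤ N • (star v * v)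
  by_cases hN0 : N ≤ 0
  · -- degenerate: star u * u = 0, so the algebra is trivial
    have hN' : ‖star u * u‖ = 0 := le_antisymm (hN ▸ hN0) (norm_nonneg _)
    have huu0 : star u * u = 0 := norm_eq_zero.mp hN'
    have h10 : (1:M) = 0 := by rw [← hlhs, huu0, mul_zero, zero_mul]
    calc v * u = v * u * 1 := (mul_one _).symm
    _ = v * u * 0 := by rw [h10]
    _ = 0 := mul_zero _
    _ = 1 := h10.symm
  push_neg at hN0
  have hNinv : (N⁻¹ : ℝ) • (1:M) ≤ star v * v := by
    have := smul_le_smul_of_nonneg_left hconj (inv_nonneg.mpr hN0.le)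
    rwa [smul_smul, inv_mul_cancel₀ hN0.ne', one_smul] at this
  have hUnit1 : IsUnit ((N⁻¹ : ℝ) • (1:M)) := by
    have hmul : ((N⁻¹ : ℝ) • (1:M)) * ((N : ℝ) • (1:M)) = 1 := by
      rw [smul_mul_smul_comm, inv_mul_cancel₀ hN0.ne', mul_one, one_smul]
    have hmul' : ((N : ℝ) • (1:M)) * ((N⁻¹ : ℝ) • (1:M)) = 1 := by
      rw [smul_mul_smul_comm, mul_inv_cancel₀ hN0.ne', mul_one, one_smul]
    exact isUnit_of_left_right hmul hmul'
  have h0le : (0:M) ≤ (N⁻¹ : ℝ) • (1:M) := smul_nonneg (inv_nonneg.mpr hN0.le) h1M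
  have hu : IsUnit (star v * v) := CStarAlgebra.isUnit_of_le _ hNinv (hUnit1.isStrictlyPositive h0le)
  set einv : M := ↑hu.unit⁻¹ with heinv
  have hh1 : (star v * v) * einv = 1 := hu.mul_val_inv
  have hh2 : einv * (star v * v) = 1 := hu.val_inv_mul
  have hstarh : star (star v * v) = star v * v := by rw [star_mul, star_star]
  have hstare : star einv = einv := by
    have h1' : star einv * (star v * v) = 1 := by
      rw [← hstarh, ← star_mul, hh1, star_one]
    calc star einv = star einv * ((star v * v) * einv) := by rw [hh1, mul_one]
    _ = (star einv * (star v * v)) * einv := by simp only [mul_assoc]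
    _ = einv := by rw [h1', one_mul]
  set p : M := v * (einv * star v) with hp
  have hp1 : p * p = p := by
    rw [hp]
    rw [show v * (einv * star v) * (v * (einv * star v))
        = v * einv * ((star v * v) * (einv * star v)) by
      simp only [mul_assoc]]
    rw [← mul_assoc (star v * v) einv, hh1, one_mul, mul_assoc]
  have hpstar : star p = p := by
    rw [hp, star_mul, star_mul, star_star, hstare, mul_assoc]
  have hτp : τ p = 1 := by
    rw [hp, hτtr v (einv * star v), mul_assoc, hh2, hτ1]
  have hf2 : (1 - p) * (1 - p) = 1 - p := by
    have hexp : (1 - p) * (1 - p) = 1 - p - p + p * p := by noncomm_ring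
    rw [hexp, hp1]; abel
  have hfstar : star (1 - p) = 1 - p := by rw [star_sub, star_one, hpstar]
  have hτf0 : τ (star (1 - p) * (1 - p)) = 0 := by
    rw [hfstar, hf2, map_sub, hτ1, hτp, sub_self]
  have hp1' : p = 1 := by
    have := hτf _ hτf0
    have h01 : (1:M) - p = 0 := this
    linear_combination (norm := noncomm_ring) -h01
  have hvr : v * (einv * star v) = 1 := by rw [← hp]; exact hp1'
  have hrv : (einv * star v) * v = 1 := by rw [mul_assoc]; exact hh2
  have hueq : u = einv * star v := by
    calc u = u * (v * (einv * star v)) := by rw [hvr, mul_one]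
    _ = (u * v) * (einv * star v) := by rw [mul_assoc]
    _ = einv * star v := by rw [huv, one_mul]
  rw [hueq]; exact hvr


end PhiStateAux
end PhiStateAuxSec

/-- A state of `M`: a positive linear functional taking the value `1` at the unit. -/
def IsStateLin (ω : M →ₗ[ℂ] ℂ) : Prop :=
  (∀ x : M, 0 ≤ x → 0 ≤ ω x) ∧ ω 1 = 1

namespace PhiStateAux
variable {H : Type*} [NormedAddCommGroup H] [InnerProductSpace ℂ H] [CompleteSpace H]
variable {M : Type*} [CStarAlgebra M] [PartialOrder M] [StarOrderedRing M]
variable {ι : M →⋆ₐ[ℂ] (H →L[ℂ] H)} (T : TracialSubalgebra ι)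

lemma Phi_sa {s : M} (hs : IsSelfAdjoint s) : IsSelfAdjoint (T.Φ s) := by
  have hd : T.Φ s = T.Φ (s⁺) - T.Φ (s⁻) := by
    rw [← map_sub]
    congr 1
    exact (CFC.posPart_sub_negPart s hs).symm
  rw [hd]
  exact ((T.Φ_pos _ (CFC.posPart_nonneg s)).isSelfAdjoint).sub
    ((T.Φ_pos _ (CFC.negPart_nonneg s)).isSelfAdjoint)

lemma Phi_star (x : M) : T.Φ (star x) = star (T.Φ x) := by
  have hkey : Complex.I * (2 * Complex.I)⁻¹ = (2:ℂ)⁻¹ := by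
    rw [mul_inv, ← mul_assoc, mul_comm Complex.I, mul_assoc,
      mul_inv_cancel₀ Complex.I_ne_zero, mul_one]
  have h2inv : star ((2:ℂ)⁻¹) = (2:ℂ)⁻¹ := by
    rw [Complex.star_def, ← Complex.ofReal_ofNat, ← Complex.ofReal_inv, Complex.conj_ofReal]
  have hIinv : star ((2 * Complex.I)⁻¹) = -(2 * Complex.I)⁻¹ := by
    rw [Complex.star_def, map_inv₀, map_mul, Complex.conj_I]
    rw [show (starRingEnd ℂ) 2 = 2 by
      rw [← Complex.ofReal_ofNat, Complex.conj_ofReal]]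
    rw [mul_neg, inv_neg]
  have hrs : IsSelfAdjoint ((2:ℂ)⁻¹ • (x + star x)) := by
    rw [IsSelfAdjoint, star_smul, star_add, star_star, h2inv, add_comm]
  have hus : IsSelfAdjoint ((2 * Complex.I)⁻¹ • (x - star x)) := by
    rw [IsSelfAdjoint, star_smul, star_sub, star_star, hIinv, neg_smul, ← smul_neg, neg_sub]
  have hx : x = (2:ℂ)⁻¹ • (x + star x)
      + Complex.I • ((2 * Complex.I)⁻¹ • (x - star x)) := by
    rw [smul_smul, hkey]; module
  have hxs : star x = (2:ℂ)⁻¹ • (x + star x)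
      - Complex.I • ((2 * Complex.I)⁻¹ • (x - star x)) := by
    rw [smul_smul, hkey]; module
  have hPx : T.Φ x = T.Φ ((2:ℂ)⁻¹ • (x + star x))
      + Complex.I • T.Φ ((2 * Complex.I)⁻¹ • (x - star x)) := by
    conv_lhs => rw [hx]
    rw [map_add, map_smul T.Φ Complex.I ((2 * Complex.I)⁻¹ • (x - star x))]
  have hPsx : T.Φ (star x) = T.Φ ((2:ℂ)⁻¹ • (x + star x))
      - Complex.I • T.Φ ((2 * Complex.I)⁻¹ • (x - star x)) := by
    conv_lhs => rw [hxs]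
    rw [map_sub, map_smul T.Φ Complex.I ((2 * Complex.I)⁻¹ • (x - star x))]
  rw [hPsx, hPx, star_add, star_smul, (Phi_sa T hrs).star_eq, (Phi_sa T hus).star_eq,
    Complex.star_def, Complex.conj_I, neg_smul, ← sub_eq_add_neg]

lemma Phi_schwarz (z : M) : star (T.Φ z) * T.Φ z ≤ T.Φ (star z * z) := by
  set d := T.Φ z with hd
  have hdA : d ∈ T.A ∧ star d ∈ T.A := by
    have : d ∈ Set.range T.Φ := ⟨z, rfl⟩
    rwa [T.Φ_range] at this
  have h1A : (1:M) ∈ T.A := one_mem _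
  have h1A' : star (1:M) ∈ T.A := by rw [star_one]; exact one_mem _
  have h0 := T.Φ_pos _ (star_mul_self_nonneg (z - d))
  have hexp : star (z - d) * (z - d)
      = (star z * z - star z * d) - (star d * z - star d * d) := by
    rw [star_sub, sub_mul, mul_sub, mul_sub]
  rw [hexp, map_sub, map_sub, map_sub] at h0
  have e1 : T.Φ (star z * d) = star d * d := by
    have := T.Φ_bimod 1 (star z) d h1A h1A' hdA.1 hdA.2
    rw [one_mul, one_mul] at this
    rw [this, Phi_star T z, ← hd]
  have e2 : T.Φ (star d * z) = star d * d := by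
    have := T.Φ_bimod (star d) z 1 hdA.2 (by rw [star_star]; exact hdA.1) h1A h1A'
    rw [mul_one, mul_one] at this
    rw [this, ← hd]
  have e3 : T.Φ (star d * d) = star d * d := by
    have := T.Φ_bimod (star d) d 1 hdA.2 (by rw [star_star]; exact hdA.1) h1A h1A'
    rw [mul_one, mul_one] at this
    rw [this, hd, T.Φ_idem, ← hd]
  rw [e1, e2, e3] at h0
  have : 0 ≤ T.Φ (star z * z) - star d * d := by
    convert h0 using 1
    abel
  exact sub_nonneg.mp this

end PhiStateAux

namespace TracialSubalgebra

variable {ι : M →⋆ₐ[ℂ] (H →L[ℂ] H)} (T : TracialSubalgebra ι)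

/-- `A` has conditional factorization: every positive invertible `b ∈ M` is of the form
`b = |a|` for some `a ∈ A` which is invertible in `M` and satisfies `Φ(a)Φ(a⁻¹) = 1`. -/
def CondFactorization : Prop :=
  ∀ b : M, 0 ≤ b → IsUnit b →
    ∃ a ∈ T.A, ∃ a' : M, a * a' = 1 ∧ a' * a = 1 ∧
      b = CFC.sqrt (star a * a) ∧ T.Φ a * T.Φ a' = 1



lemma master (hT : T.CondFactorization)
    (ω : M →ₗ[ℂ] ℂ) (hpos : ∀ x : M, 0 ≤ x → 0 ≤ ω x) (hone : ω 1 = 1)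
    (hωA : ∀ a ∈ T.A, ω (T.Φ a) = ω a)
    {c c' : M} (hc : 0 ≤ c) (h1 : c * c' = 1) (h2 : c' * c = 1) :
    1 ≤ (ω c).re * (ω (T.Φ c')).re := by
  have hb0 : (0:M) ≤ CFC.sqrt c := CFC.sqrt_nonneg (a := c)
  have hbb : CFC.sqrt c * CFC.sqrt c = c := CFC.sqrt_mul_sqrt_self c hc
  have hbu : IsUnit (CFC.sqrt c) := by
    refine PhiStateAux.isUnit_of_left_right (x := CFC.sqrt c * c') (x' := c' * CFC.sqrt c) ?_ ?_
    · rw [← mul_assoc, hbb, h1]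
    · rw [mul_assoc, hbb, h2]
  obtain ⟨a, haA, a', haa', ha'a, hbeq, hΦaa'⟩ := hT (CFC.sqrt c) hb0 hbu
  have hceq : star a * a = c := by
    have h' : CFC.sqrt (star a * a) * CFC.sqrt (star a * a) = star a * a :=
      CFC.sqrt_mul_sqrt_self _ (star_mul_self_nonneg a)
    rw [← hbeq] at h'
    rw [← h', hbb]
  have hstar1 : star a * star a' = 1 := by rw [← star_mul, ha'a, star_one]
  have hstar2 : star a' * star a = 1 := by rw [← star_mul, haa', star_one]
  have hcinv2 : (a' * star a') * c = 1 := by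
    rw [← hceq, show (a' * star a') * (star a * a) = a' * ((star a' * star a) * a) by
      simp only [mul_assoc], hstar2, one_mul, ha'a]
  have hinv_eq : a' * star a' = c' := by
    calc a' * star a' = (a' * star a') * (c * c') := by rw [h1, mul_one]
    _ = ((a' * star a') * c) * c' := by simp only [mul_assoc]
    _ = c' := by rw [hcinv2, one_mul]
  set q := T.Φ a' with hq
  have hqA : q ∈ T.A ∧ star q ∈ T.A := by
    have : q ∈ Set.range T.Φ := ⟨a', rfl⟩
    rwa [T.Φ_range] at this
  have hfin : q * T.Φ a = 1 := PhiStateAux.flip_inverse T.τ T.τ_trace T.τ_faithful T.τ_one hΦaa'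
  have hωqa : ω (q * a) = 1 := by
    have hmem : q * a ∈ T.A := mul_mem hqA.1 haA
    have hbim : T.Φ (q * a) = q * T.Φ a := by
      have := T.Φ_bimod q a 1 hqA.1 hqA.2 (one_mem _) (by rw [star_one]; exact one_mem _)
      rw [mul_one, mul_one] at this
      exact this
    rw [← hωA _ hmem, hbim, hfin, hone]
  have hcs := PhiStateAux.omega_cs ω hpos (star q) a
  rw [star_star, hceq, hωqa, norm_one, one_pow] at hcs
  have hsch := PhiStateAux.Phi_schwarz T (star a')
  rw [star_star, PhiStateAux.Phi_star T a', star_star, ← hq, hinv_eq] at hsch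
  have hmono := PhiStateAux.omega_mono ω hpos hsch
  have hcre : 0 ≤ (ω c).re := by
    have := hpos c hc; rw [Complex.nonneg_iff] at this; exact this.1
  nlinarith [hcs, hmono, hcre, mul_le_mul_of_nonneg_right hmono hcre]


lemma cfc_quadratic {y : M} (hy : IsSelfAdjoint y) (α b c : ℝ) :
    cfc (fun s : ℝ => α + b * s + c * s ^ 2) y = α • (1:M) + b • y + c • (y * y) := by
  have e1 : cfc (fun _ : ℝ => α) y = α • (1:M) := by
    rw [cfc_const α y hy, Algebra.algebraMap_eq_smul_one]
  have e2 : cfc (fun s : ℝ => b * s) y = b • y := cfc_smul_id b y hy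
  have e3 : cfc (fun s : ℝ => c * s ^ 2) y = c • (y * y) := by
    have h4 : cfc (fun s : ℝ => c • s ^ 2) y = c • cfc (fun s : ℝ => s ^ 2) y :=
      cfc_smul c (fun s : ℝ => s ^ 2) y
    have h5 : cfc (fun s : ℝ => s ^ 2) y = y ^ 2 := cfc_pow_id y 2 hy
    exact h4.trans (by rw [h5, sq])
  calc cfc (fun s : ℝ => α + b * s + c * s ^ 2) y
      = cfc (fun _ : ℝ => α) y + cfc (fun s : ℝ => b * s) y + cfc (fun s : ℝ => c * s ^ 2) y := by
        rw [← cfc_add (a := y) (fun _ : ℝ => α) (fun s : ℝ => b * s) (by fun_prop) (by fun_prop),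
          ← cfc_add (a := y) (fun s : ℝ => α + b * s) (fun s : ℝ => c * s ^ 2) (by fun_prop)
            (by fun_prop)]
  _ = α • (1:M) + b • y + c • (y * y) := by rw [e1, e2, e3]

set_option maxHeartbeats 1000000 in
lemma kernel_vanish (hT : T.CondFactorization)
    (ω : M →ₗ[ℂ] ℂ) (hpos : ∀ x : M, 0 ≤ x → 0 ≤ ω x) (hone : ω 1 = 1)
    (hωA : ∀ a ∈ T.A, ω (T.Φ a) = ω a)
    {y : M} (hy : IsSelfAdjoint y) (hΦy : T.Φ y = 0) : ω y = 0 := by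
  have hnontriv : Nontrivial M := by
    refine ⟨1, 0, fun h10 => ?_⟩
    have := T.τ_one
    rw [h10, map_zero] at this
    exact one_ne_zero this.symm
  set N : ℝ := ‖y‖ with hN
  have hN0 : 0 ≤ N := norm_nonneg y
  set K : ℝ := N ^ 2 + N ^ 3 with hK
  have hK0 : 0 ≤ K := by positivity
  clear_value N K
  have hβreal : ω y = ((ω y).re : ℂ) := PhiStateAux.omega_real ω hpos hy
  set β : ℝ := (ω y).re with hβ
  have hyy0 : (0:M) ≤ y * y := by
    have := star_mul_self_nonneg y
    rwa [hy.star_eq] at this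
  have hΦyy0 : (0:ℂ) ≤ ω (T.Φ (y * y)) := hpos _ (T.Φ_pos _ hyy0)
  have hYreal : ω (T.Φ (y * y)) = ((ω (T.Φ (y * y))).re : ℂ) := by
    rw [Complex.nonneg_iff] at hΦyy0
    exact Complex.ext rfl (by simpa using hΦyy0.2.symm)
  set Yv : ℝ := (ω (T.Φ (y * y))).re with hYv
  have hYv0 : 0 ≤ Yv := by
    rw [Complex.nonneg_iff] at hΦyy0; exact hΦyy0.1
  have key : ∀ t : ℝ, |t| ≤ 1 → 1 ≤ (1 + t * β + K * t ^ 2) * (1 + t ^ 2 / 2 * Yv) := by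
    intro t ht
    set g : ℝ → ℝ := fun s => 1 - t * s + t ^ 2 / 2 * s ^ 2 with hg
    have hg2 : ∀ s, (1:ℝ)/2 ≤ g s := by
      intro s; rw [hg]; nlinarith [sq_nonneg (t * s - 1)]
    have hgpos : ∀ s, (0:ℝ) < g s := fun s => lt_of_lt_of_le (by norm_num) (hg2 s)
    have hgcont : Continuous g := by rw [hg]; fun_prop
    have hgc : ContinuousOn g (spectrum ℝ y) := hgcont.continuousOn
    have hgic : ContinuousOn (fun s => (g s)⁻¹) (spectrum ℝ y) :=
      (hgcont.inv₀ fun s => (hgpos s).ne').continuousOn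
    clear_value g
    set m := cfc g y with hm
    set n := cfc (fun s => (g s)⁻¹) y with hn
    have hmn : m * n = 1 := by
      rw [hm, hn, ← cfc_mul _ _ y hgc hgic]
      calc cfc (fun s => g s * (g s)⁻¹) y = cfc (fun _ : ℝ => (1:ℝ)) y :=
            cfc_congr fun s _ => mul_inv_cancel₀ (hgpos s).ne'
      _ = 1 := by rw [cfc_const 1 y hy, map_one]
    have hnm : n * m = 1 := by
      rw [hm, hn, ← cfc_mul _ _ y hgic hgc]
      calc cfc (fun s => (g s)⁻¹ * g s) y = cfc (fun _ : ℝ => (1:ℝ)) y :=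
            cfc_congr fun s _ => inv_mul_cancel₀ (hgpos s).ne'
      _ = 1 := by rw [cfc_const 1 y hy, map_one]
    have hn0 : (0:M) ≤ n := cfc_nonneg fun s _ => inv_nonneg.mpr (hgpos s).le
    clear_value m n
    have hmaster := master T hT ω hpos hone hωA hn0 hnm hmn
    -- algebraic form of m
    have hm_eq : m = 1 - ((t:ℂ)) • y + (((t ^ 2 / 2 : ℝ) : ℂ)) • (y * y) := by
      rw [hm, show g = fun s : ℝ => (1:ℝ) + (-t) * s + (t ^ 2 / 2) * s ^ 2 from
        funext fun s => by rw [hg]; ring]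
      rw [cfc_quadratic hy 1 (-t) (t ^ 2 / 2), one_smul, neg_smul,
        ← Complex.coe_smul, ← Complex.coe_smul]
      abel
    have hΦm : T.Φ m = 1 + (((t ^ 2 / 2 : ℝ) : ℂ)) • T.Φ (y * y) := by
      rw [hm_eq, map_add, map_sub, map_smul, map_smul, T.Φ_one, hΦy, smul_zero, sub_zero]
    have hωΦm : (ω (T.Φ m)).re = 1 + t ^ 2 / 2 * Yv := by
      rw [hΦm, map_add, map_smul, hone, hYreal]
      rw [smul_eq_mul, ← Complex.ofReal_mul]
      rw [Complex.add_re, Complex.one_re, Complex.ofReal_re]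
    -- upper bound for n
    have hub : n ≤ cfc (fun s : ℝ => (1 + K * t ^ 2) + t * s + (0:ℝ) * s ^ 2) y := by
      rw [hn]
      refine cfc_mono (fun s hs => ?_) hgic (by fun_prop)
      have hsN : |s| ≤ N := by
        have := spectrum.norm_le_norm_of_mem hs
        rwa [Real.norm_eq_abs, ← hN] at this
      have habs_ts : |t * s| ≤ N := by
        rw [abs_mul]
        calc |t| * |s| ≤ 1 * N := mul_le_mul ht hsN (abs_nonneg s) zero_le_one
        _ = N := one_mul N
      have h1' : -N ≤ t * s ∧ t * s ≤ N := abs_le.mp habs_ts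
      have hs2 : s ^ 2 ≤ N ^ 2 := by nlinarith [abs_le.mp hsN, abs_nonneg s]
      have ht2 : t ^ 2 ≤ 1 := by nlinarith [abs_le.mp ht, abs_nonneg t]
      have hKt : 0 ≤ K * t ^ 2 := by positivity
      have hgs : (0:ℝ) < 1 - t * s + t ^ 2 / 2 * s ^ 2 := by
        nlinarith [sq_nonneg (t * s - 1)]
      have hhalf : (0:ℝ) ≤ (1 - t * s + t ^ 2 / 2 * s ^ 2) - 1 / 2 := by
        nlinarith [sq_nonneg (t * s - 1)]
      have hq1' : K * t ^ 2 / 2 ≤ K * t ^ 2 * (1 - t * s + t ^ 2 / 2 * s ^ 2) := by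
        nlinarith [mul_nonneg hKt hhalf]
      have hq2 : (t * s) ^ 2 * (1 - t * s) ≤ t ^ 2 * N ^ 2 * (1 + N) := by
        nlinarith [sq_nonneg (t * s), h1'.1, h1'.2, hN0, hs2, ht2, sq_nonneg t,
          mul_nonneg (sq_nonneg (t * s)) (by linarith [h1'.1] : (0:ℝ) ≤ N + t * s),
          mul_nonneg (mul_nonneg (sq_nonneg t) (by linarith [hs2] : (0:ℝ) ≤ N ^ 2 - s ^ 2))
            (by linarith [hN0] : (0:ℝ) ≤ 1 + N)]
      have hKid : t ^ 2 * N ^ 2 * (1 + N) = K * t ^ 2 := by rw [hK]; ring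
      show (g s)⁻¹ ≤ (1 + K * t ^ 2) + t * s + (0:ℝ) * s ^ 2
      have hgseq : g s = 1 - t * s + t ^ 2 / 2 * s ^ 2 := by rw [hg]
      rw [hgseq, inv_eq_one_div, div_le_iff₀ hgs]
      nlinarith [hq1', hq2, hKid]
    have hub' := PhiStateAux.omega_mono ω hpos hub
    have hpoly : cfc (fun s : ℝ => (1 + K * t ^ 2) + t * s + (0:ℝ) * s ^ 2) y
        = ((1 + K * t ^ 2 : ℝ) : ℂ) • (1:M) + ((t:ℂ)) • y := by
      rw [cfc_quadratic hy (1 + K * t ^ 2) t 0, zero_smul, add_zero,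
        ← Complex.coe_smul, ← Complex.coe_smul]
    have hωub : (ω (cfc (fun s : ℝ => (1 + K * t ^ 2) + t * s + (0:ℝ) * s ^ 2) y)).re
        = 1 + K * t ^ 2 + t * β := by
      rw [hpoly, map_add, map_smul, map_smul, hone, hβreal]
      rw [smul_eq_mul, smul_eq_mul, mul_one, ← Complex.ofReal_mul]
      rw [Complex.add_re, Complex.ofReal_re, Complex.ofReal_re]
    rw [hωub] at hub'
    rw [hωΦm] at hmaster
    have hP0 : (0:ℝ) ≤ 1 + t ^ 2 / 2 * Yv := by positivity
    have hn_re0 : 0 ≤ (ω n).re := by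
      have := hpos _ hn0; rw [Complex.nonneg_iff] at this; exact this.1
    nlinarith [hmaster, hub', hP0, hn_re0,
      mul_le_mul_of_nonneg_right hub' hP0]
  -- conclude β = 0
  have hβ0 : β = 0 := by
    by_contra hb
    have habs : 0 < |β| := abs_pos.mpr hb
    set C : ℝ := K + Yv / 2 + |β| * Yv / 2 + K * Yv / 2 with hC
    have hC0 : 0 ≤ C := by positivity
    have hbound : ∀ s : ℝ, 0 < s → s ≤ 1 → |β| ≤ s * C := by
      intro s hs hs1
      have k1 := key s (by rw [abs_of_pos hs]; exact hs1)
      have k2 := key (-s) (by rw [abs_neg, abs_of_pos hs]; exact hs1)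
      have hss : s ^ 2 ≤ 1 := by nlinarith [hs, hs1]
      have hs4 : s ^ 4 ≤ s ^ 2 := by
        nlinarith [mul_le_mul_of_nonneg_left hss (sq_nonneg s)]
      have hs3 : s ^ 3 ≤ s ^ 2 := by
        nlinarith [mul_le_mul_of_nonneg_left hs1 (sq_nonneg s)]
      have A1 : s ^ 3 * (|β| * Yv) ≤ s ^ 2 * (|β| * Yv) :=
        mul_le_mul_of_nonneg_right hs3 (by positivity)
      have A2 : s ^ 4 * (K * Yv) ≤ s ^ 2 * (K * Yv) :=
        mul_le_mul_of_nonneg_right hs4 (mul_nonneg hK0 hYv0)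
      have A3 : (-β) * (s ^ 3 * Yv) ≤ |β| * (s ^ 3 * Yv) :=
        mul_le_mul_of_nonneg_right (neg_le_abs β) (by positivity)
      have A4 : β * (s ^ 3 * Yv) ≤ |β| * (s ^ 3 * Yv) :=
        mul_le_mul_of_nonneg_right (le_abs_self β) (by positivity)
      have hk2' : s * β ≤ s * (s * C) := by
        rw [hC]; nlinarith [k2, A1, A2, A3, hK0, hYv0, hs.le, sq_nonneg s]
      have hk1' : s * (-β) ≤ s * (s * C) := by
        rw [hC]; nlinarith [k1, A1, A2, A4, hK0, hYv0, hs.le, sq_nonneg s]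
      have hb1 : β ≤ s * C := le_of_mul_le_mul_left hk2' hs
      have hb2 : -β ≤ s * C := le_of_mul_le_mul_left hk1' hs
      exact abs_le.mpr ⟨by linarith, hb1⟩
    have h2C : (0:ℝ) < 2 * (C + 1) := by linarith
    have hfinal := hbound (min 1 (|β| / (2 * (C + 1))))
      (lt_min one_pos (by positivity)) (min_le_left _ _)
    have hle : min 1 (|β| / (2 * (C + 1))) ≤ |β| / (2 * (C + 1)) := min_le_right _ _
    have hx : |β| * (2 * (C + 1)) ≤ |β| * C := by
      rw [← le_div_iff₀ h2C]
      calc |β| ≤ min 1 (|β| / (2 * (C + 1))) * C := hfinal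
      _ ≤ |β| / (2 * (C + 1)) * C := mul_le_mul_of_nonneg_right hle hC0
      _ = |β| * C / (2 * (C + 1)) := by ring
    nlinarith [hx, habs, hC0, mul_pos habs (by linarith : (0:ℝ) < C + 2)]
  rw [hβreal, hβ0, Complex.ofReal_zero]


/-- A tracial subalgebra of `M` with conditional factorization has the `Φ`-state property:
every state `ω` of `M` with `ω ∘ Φ = ω` on `A` satisfies `ω ∘ Φ = ω` on all of `M`. -/
theorem phiState_of_condFactorization (hT : T.CondFactorization)
    (ω : M →ₗ[ℂ] ℂ) (hω : IsStateLin ω)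
    (hωA : ∀ a ∈ T.A, ω (T.Φ a) = ω a) :
    ∀ x : M, ω (T.Φ x) = ω x := by
  intro x
  obtain ⟨hpos, hone⟩ := hω
  set z := x - T.Φ x with hz
  have hΦz : T.Φ z = 0 := by rw [hz, map_sub, T.Φ_idem, sub_self]
  have hΦsz : T.Φ (star z) = 0 := by rw [PhiStateAux.Phi_star T z, hΦz, star_zero]
  have h2inv : star ((2:ℂ)⁻¹) = (2:ℂ)⁻¹ := by
    rw [Complex.star_def, ← Complex.ofReal_ofNat, ← Complex.ofReal_inv, Complex.conj_ofReal]
  have hIinv : star ((2 * Complex.I)⁻¹) = -(2 * Complex.I)⁻¹ := by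
    rw [Complex.star_def, map_inv₀, map_mul, Complex.conj_I]
    rw [show (starRingEnd ℂ) 2 = 2 by
      rw [← Complex.ofReal_ofNat, Complex.conj_ofReal]]
    rw [mul_neg, inv_neg]
  have hkey : Complex.I * (2 * Complex.I)⁻¹ = (2:ℂ)⁻¹ := by
    rw [mul_inv, ← mul_assoc, mul_comm Complex.I, mul_assoc,
      mul_inv_cancel₀ Complex.I_ne_zero, mul_one]
  have hrs : IsSelfAdjoint ((2:ℂ)⁻¹ • (z + star z)) := by
    rw [IsSelfAdjoint, star_smul, star_add, star_star, h2inv, add_comm]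
  have hus : IsSelfAdjoint ((2 * Complex.I)⁻¹ • (z - star z)) := by
    rw [IsSelfAdjoint, star_smul, star_sub, star_star, hIinv, neg_smul, ← smul_neg, neg_sub]
  have hdecomp : z = (2:ℂ)⁻¹ • (z + star z)
      + Complex.I • ((2 * Complex.I)⁻¹ • (z - star z)) := by
    rw [smul_smul, hkey]; module
  have hΦr : T.Φ ((2:ℂ)⁻¹ • (z + star z)) = 0 := by
    rw [map_smul, map_add, hΦz, hΦsz, add_zero, smul_zero]
  have hΦu : T.Φ ((2 * Complex.I)⁻¹ • (z - star z)) = 0 := by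
    rw [map_smul, map_sub, hΦz, hΦsz, sub_zero, smul_zero]
  have hr0 : ω ((2:ℂ)⁻¹ • (z + star z)) = 0 :=
    kernel_vanish T hT ω hpos hone hωA hrs hΦr
  have hu0 : ω ((2 * Complex.I)⁻¹ • (z - star z)) = 0 :=
    kernel_vanish T hT ω hpos hone hωA hus hΦu
  have hz0 : ω z = 0 := by
    conv_lhs => rw [hdecomp]
    rw [map_add, hr0, map_smul, hu0, smul_zero, zero_add]
  rw [hz, map_sub] at hz0
  exact (sub_eq_zero.mp hz0).symm

end TracialSubalgebra
end
end

section
/- Let A be a tracial subalgebra of M. If A has the Φ-state property then A has the unique state extension property. Conversely, if A is antisymmetric (that is, D = ℂ1) and A has the unique state extension property, then A has the Φ-state property. -/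
open scoped ComplexOrder

noncomputable section

variable {H : Type*} [NormedAddCommGroup H] [InnerProductSpace ℂ H] [CompleteSpace H]
variable {M : Type*} [CStarAlgebra M] [PartialOrder M] [StarOrderedRing M]

namespace TracialSubalgebra

variable {ι : M →⋆ₐ[ℂ] (H →L[ℂ] H)} (T : TracialSubalgebra ι)

/-- If a tracial subalgebra `A` of `M` has the `Φ`-state property then it has the unique state
extension property (`τ` is the only state of `M` extending `τ|_A`).  Conversely, if `A` is
antisymmetric (`D = ℂ1`) and has the unique state extension property, then `A` has the
`Φ`-state property. -/
theorem phiState_and_uniqueStateExtension :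
    ((∀ ω : M →ₗ[ℂ] ℂ, IsStateLin ω → (∀ a ∈ T.A, ω (T.Φ a) = ω a) →
        ∀ x : M, ω (T.Φ x) = ω x) →
      ∀ ω : M →ₗ[ℂ] ℂ, IsStateLin ω → (∀ a ∈ T.A, ω a = T.τ a) → ∀ x : M, ω x = T.τ x)
    ∧ (T.diag = Set.range (algebraMap ℂ M) →
      (∀ ω : M →ₗ[ℂ] ℂ, IsStateLin ω → (∀ a ∈ T.A, ω a = T.τ a) → ∀ x : M, ω x = T.τ x) →
      ∀ ω : M →ₗ[ℂ] ℂ, IsStateLin ω → (∀ a ∈ T.A, ω (T.Φ a) = ω a) →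
        ∀ x : M, ω (T.Φ x) = ω x) := by
  have hΦmem : ∀ x : M, T.Φ x ∈ T.A ∧ star (T.Φ x) ∈ T.A := by
    intro x
    have h1 : T.Φ x ∈ Set.range T.Φ := ⟨x, rfl⟩
    rw [T.Φ_range] at h1
    exact h1
  constructor
  · intro hΦ ω hω hA x
    have key : ∀ a ∈ T.A, ω (T.Φ a) = ω a := by
      intro a ha
      rw [hA _ (hΦmem a).1, hA a ha, T.τ_comp_Φ]
    have h2 := hΦ ω hω key x
    rw [← h2, hA _ (hΦmem x).1, T.τ_comp_Φ]
  · intro hD hU ω hω hΦA x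
    have hscal : ∀ y : M, y ∈ Set.range (algebraMap ℂ M) →
        ∀ ρ : M →ₗ[ℂ] ℂ, ρ 1 = 1 → ρ y = T.τ y := by
      rintro y ⟨c, rfl⟩ ρ hρ1
      rw [Algebra.algebraMap_eq_smul_one, map_smul, map_smul, hρ1]
      have : T.τ (1 : M) = 1 := T.τ_one
      rw [this]
    have hΦD : ∀ a : M, T.Φ a ∈ Set.range (algebraMap ℂ M) := by
      intro a
      rw [← hD]
      exact hΦmem a
    -- ω agrees with τ on A
    have hAτ : ∀ a ∈ T.A, ω a = T.τ a := by
      intro a ha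
      rw [← hΦA a ha, hscal _ (hΦD a) ω hω.2, T.τ_comp_Φ]
    have hall := hU ω hω hAτ
    rw [hall x, hall (T.Φ x), T.τ_comp_Φ]

end TracialSubalgebra
end
end

section
/- Let A be a tracial subalgebra of M and let ρ be a positive linear functional on M such that ρ − τ is a positive functional. Let π : M → B(K) be a unital *-homomorphism into the bounded operators on a complex Hilbert space K with ρ(x) = ⟨π(x)Ω, Ω⟩ for all x ∈ M, for some Ω ∈ K, and let Ω₀ be the orthogonal projection of Ω onto the closure of the subspace {π(f)Ω : f ∈ A₀}. Then for every positive d ∈ D one has ‖π(d^{1/2})(Ω − Ω₀)‖² ≥ τ(d), where d^{1/2} is the positive square root of d given by the continuous functional calculus. In particular (taking d = 1), Ω ≠ Ω₀. -/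
open scoped ComplexOrder

noncomputable section

variable {H : Type*} [NormedAddCommGroup H] [InnerProductSpace ℂ H] [CompleteSpace H]
variable {M : Type*} [CStarAlgebra M] [PartialOrder M] [StarOrderedRing M]

namespace TracialSubalgebra

variable {ι : M →⋆ₐ[ℂ] (H →L[ℂ] H)} (T : TracialSubalgebra ι)

/-- Let `A` be a tracial subalgebra of `M` and `ρ` a positive linear functional on `M` with
`ρ - τ` positive.  If `(π, Ω)` is a GNS pair for `ρ` and `Ω₀` is the orthogonal projection of
`Ω` onto the closure of `{π(f)Ω : f ∈ A₀}`, then `‖π(d^{1/2})(Ω - Ω₀)‖² ≥ τ(d)` for every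
positive `d ∈ D`; in particular `Ω ≠ Ω₀`. -/
theorem gns_projection_dominates_trace
    (ρ : M →ₗ[ℂ] ℂ)
    (hρpos : ∀ x : M, 0 ≤ x → 0 ≤ ρ x)
    (hρτ : ∀ x : M, 0 ≤ x → 0 ≤ ρ x - T.τ x)
    {K : Type*} [NormedAddCommGroup K] [InnerProductSpace ℂ K] [CompleteSpace K]
    (π : M →⋆ₐ[ℂ] (K →L[ℂ] K)) (Ω : K)
    (hGNS : ∀ x : M, ρ x = inner ℂ Ω (π x Ω))
    (Ω₀ : K)
    (hmem : Ω₀ ∈ closure {v : K | ∃ f ∈ T.Azero, v = π f Ω})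
    (hperp : ∀ v ∈ closure {v : K | ∃ f ∈ T.Azero, v = π f Ω},
        (inner ℂ v (Ω - Ω₀) : ℂ) = 0) :
    (∀ d : M, d ∈ T.A → star d ∈ T.A → 0 ≤ d →
        T.τ d ≤ ((‖π (CFC.sqrt d) (Ω - Ω₀)‖ : ℂ) ^ 2)) ∧ Ω ≠ Ω₀ := by
  -- τ is hermitian
  have hpos : ∀ y : M, 0 ≤ y → starRingEnd ℂ (T.τ y) = T.τ y := by
    intro y hy
    have h := T.τ_pos y hy
    rw [Complex.le_def] at h
    exact Complex.conj_eq_iff_im.mpr (by simpa using h.2.symm)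
  have hsa : ∀ y : M, IsSelfAdjoint y → starRingEnd ℂ (T.τ y) = T.τ y := by
    intro y hy
    have hdcmp := CFC.posPart_sub_negPart y hy
    calc starRingEnd ℂ (T.τ y) = starRingEnd ℂ (T.τ (y⁺ - y⁻)) := by rw [hdcmp]
      _ = starRingEnd ℂ (T.τ y⁺) - starRingEnd ℂ (T.τ y⁻) := by rw [map_sub, map_sub]
      _ = T.τ y⁺ - T.τ y⁻ := by
          rw [hpos _ (CFC.posPart_nonneg y), hpos _ (CFC.negPart_nonneg y)]
      _ = T.τ y := by rw [← map_sub, hdcmp]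
  have htstar : ∀ y : M, T.τ (star y) = starRingEnd ℂ (T.τ y) := by
    intro y
    open ComplexStarModule in
    have hy := realPart_add_I_smul_imaginaryPart y
    have hR : IsSelfAdjoint ((ℜ y : M)) := (ℜ y).2
    have hI : IsSelfAdjoint ((ℑ y : M)) := (ℑ y).2
    calc T.τ (star y) = T.τ (star ((ℜ y : M) + Complex.I • (ℑ y : M))) := by rw [hy]
      _ = T.τ ((ℜ y : M)) - Complex.I * T.τ ((ℑ y : M)) := by
          rw [star_add, star_smul, hR.star_eq, hI.star_eq, map_add, map_smul]
          simp [Complex.conj_I, sub_eq_add_neg, neg_mul]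
      _ = starRingEnd ℂ (T.τ ((ℜ y : M)) + Complex.I * T.τ ((ℑ y : M))) := by
          rw [map_add, map_mul, Complex.conj_I, hsa _ hR, hsa _ hI]; ring
      _ = starRingEnd ℂ (T.τ ((ℜ y : M) + Complex.I • (ℑ y : M))) := by
          congr 1
          rw [map_add, map_smul, smul_eq_mul]
      _ = starRingEnd ℂ (T.τ y) := by rw [hy]
  have main : ∀ d : M, d ∈ T.A → star d ∈ T.A → 0 ≤ d →
      T.τ d ≤ ((‖π (CFC.sqrt d) (Ω - Ω₀)‖ : ℂ) ^ 2) := by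
    intro d hdA hdsA hdpos
    set s := CFC.sqrt d with hs
    have hssa : IsSelfAdjoint s := IsSelfAdjoint.of_nonneg (CFC.sqrt_nonneg d)
    have hss : s * s = d := CFC.sqrt_mul_sqrt_self d hdpos
    have key : ∀ f ∈ T.Azero, T.τ d ≤ ((‖π s (Ω - π f Ω)‖ : ℂ) ^ 2) := by
      intro f hf
      obtain ⟨hfA, hfΦ⟩ := hf
      set x : M := 1 - f with hx
      have hxdx_pos : 0 ≤ star x * d * x := star_left_conjugate_nonneg hdpos x
      have h1 : T.τ (d * f) = 0 := by
        rw [← T.τ_comp_Φ, T.Φ_mult d f hdA hfA, hfΦ, mul_zero, map_zero]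
      have h2 : T.τ (star f * d) = 0 := by
        have hz : T.τ (star d * f) = 0 := by
          rw [← T.τ_comp_Φ, T.Φ_mult _ f hdsA hfA, hfΦ, mul_zero, map_zero]
        have := htstar (star d * f)
        rw [star_mul, star_star, hz, map_zero] at this
        exact this
      have h3 : 0 ≤ T.τ (star f * d * f) := T.τ_pos _ (star_left_conjugate_nonneg hdpos f)
      have hexp : star x * d * x = d - star f * d - d * f + star f * d * f := by
        simp only [hx, star_sub, star_one]
        noncomm_ring
      have hτx : T.τ (star x * d * x) = T.τ d + T.τ (star f * d * f) := by
        rw [hexp, map_add, map_sub, map_sub, h1, h2]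
        ring
      have step1 : T.τ d ≤ T.τ (star x * d * x) := by
        rw [hτx]; exact le_add_of_nonneg_right h3
      have step2 : T.τ (star x * d * x) ≤ ρ (star x * d * x) :=
        sub_nonneg.mp (hρτ _ hxdx_pos)
      have step3 : ρ (star x * d * x) = ((‖π s (Ω - π f Ω)‖ : ℂ) ^ 2) := by
        have hw : star x * d * x = star (s * x) * (s * x) := by
          rw [star_mul, hssa.star_eq, ← hss]
          noncomm_ring
        have hπx : π x Ω = Ω - π f Ω := by
          rw [hx, map_sub, map_one, ContinuousLinearMap.sub_apply,
            ContinuousLinearMap.one_apply]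
        rw [hGNS, hw, map_mul, map_star]
        rw [ContinuousLinearMap.mul_apply, ContinuousLinearMap.star_eq_adjoint,
          ContinuousLinearMap.adjoint_inner_right, map_mul,
          ContinuousLinearMap.mul_apply, hπx, inner_self_eq_norm_sq_to_K]
        norm_cast
      calc T.τ d ≤ T.τ (star x * d * x) := step1
        _ ≤ ρ (star x * d * x) := step2
        _ = ((‖π s (Ω - π f Ω)‖ : ℂ) ^ 2) := step3
    have him : (T.τ d).im = 0 := by
      have h := T.τ_pos d hdpos
      rw [Complex.le_def] at h
      simpa using h.2.symm
    set t : ℝ := (T.τ d).re with ht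
    have hτd : T.τ d = (t : ℂ) := by
      apply Complex.ext <;> simp [ht, him]
    have hC : IsClosed {v : K | t ≤ ‖π s (Ω - v)‖ ^ 2} := by
      apply isClosed_le continuous_const
      fun_prop
    have hsub : {v : K | ∃ f ∈ T.Azero, v = π f Ω} ⊆ {v : K | t ≤ ‖π s (Ω - v)‖ ^ 2} := by
      rintro v ⟨f, hf, rfl⟩
      have hk := key f hf
      rw [hτd] at hk
      have := (Complex.le_def.mp hk).1
      simpa [← Complex.ofReal_pow] using this
    have hΩ₀ : t ≤ ‖π s (Ω - Ω₀)‖ ^ 2 := closure_minimal hsub hC hmem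
    rw [hτd, show ((‖π s (Ω - Ω₀)‖ : ℂ) ^ 2) = ((‖π s (Ω - Ω₀)‖ ^ 2 : ℝ) : ℂ) by push_cast; ring]
    exact Complex.real_le_real.mpr hΩ₀
  refine ⟨main, ?_⟩
  intro h
  have h1A : (1 : M) ∈ T.A := T.A.one_mem
  have h1pos : (0 : M) ≤ 1 := by simpa using star_mul_self_nonneg (1 : M)
  have hm := main 1 h1A (by rwa [star_one]) h1pos
  rw [h, sub_self, T.τ_one] at hm
  have : π (CFC.sqrt (1 : M)) (0 : K) = 0 := map_zero _
  rw [this] at hm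
  simp only [norm_zero, Complex.ofReal_zero] at hm
  norm_num [Complex.le_def] at hm

end TracialSubalgebra
end
end
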